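/- arXiv:1606.09048 — 7 statements merged into one kernel-verified Lean document; each statement's English description precedes it below -/
import Mathlib

section
/- Let a > 1 and b ≥ 0 be real numbers, D > 0, and μ ∈ ℝ. Let p : (0,1) → ℝ be twice continuously differentiable, with p and λ ↦ λ·p(λ) integrable on (0,1) and ∫₀¹ p(λ) dλ > 0. Define the flux F(λ) = p'(λ) − p(λ)·(b/λ − a/(1−λ)). Assume the one-sided limits lim_{λ→0⁺} F(λ) and lim_{λ→1⁻} F(λ) exist and are equal. If p satisfies the stationary equation D·F'(λ) + (λ − μ)·p(λ) = 0 for all λ ∈ (0,1), then μ = (∫₀¹ λ p(λ) dλ) / (∫₀¹ p(λ) dλ), i.e. μ equals the mean ⟨λ⟩ of the distribution p. -/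
open MeasureTheory Set Filter

/-- Lemma 1 (final claim): for a solution of the linearized stationary Fokker–Planck
equation with conserved flux, the parameter `μ` equals the mean `⟨λ⟩`. -/
theorem stationary_parameter_eq_mean
    (a b D μ : ℝ) (ha : 1 < a) (hb : 0 ≤ b) (hD : 0 < D)
    (p : ℝ → ℝ)
    (hp : ContDiffOn ℝ 2 p (Ioo 0 1))
    (hpInt : IntegrableOn p (Ioo 0 1))
    (hlpInt : IntegrableOn (fun l => l * p l) (Ioo 0 1))
    (hpos : 0 < ∫ l in Ioo (0:ℝ) 1, p l)
    (F : ℝ → ℝ)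
    (hF : ∀ l, F l = deriv p l - p l * (b / l - a / (1 - l)))
    (L : ℝ)
    (hF0 : Tendsto F (nhdsWithin 0 (Ioi 0)) (nhds L))
    (hF1 : Tendsto F (nhdsWithin 1 (Iio 1)) (nhds L))
    (heq : ∀ l ∈ Ioo (0:ℝ) 1, D * deriv F l + (l - μ) * p l = 0) :
    μ = (∫ l in Ioo (0:ℝ) 1, l * p l) / (∫ l in Ioo (0:ℝ) 1, p l) := by
  set g : ℝ → ℝ := fun l => (μ - l) * p l / D with hg
  have hopen : IsOpen (Ioo (0:ℝ) 1) := isOpen_Ioo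
  -- F is differentiable on Ioo with derivative g
  have hderiv : ∀ x ∈ Ioo (0:ℝ) 1, HasDerivAt F (g x) x := by
    intro x hx
    have hdp : ContDiffOn ℝ 1 (deriv p) (Ioo 0 1) :=
      hp.deriv_of_isOpen hopen (by norm_num)
    have h1 : DifferentiableAt ℝ (deriv p) x :=
      (hdp.differentiableOn (by norm_num) x hx).differentiableAt
        (hopen.mem_nhds hx)
    have h2 : DifferentiableAt ℝ p x :=
      (hp.differentiableOn (by norm_num) x hx).differentiableAt (hopen.mem_nhds hx)
    have h3 : DifferentiableAt ℝ (fun l : ℝ => b / l - a / (1 - l)) x := by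
      apply DifferentiableAt.sub
      · exact (differentiableAt_const b).div differentiableAt_id hx.1.ne'
      · exact (differentiableAt_const a).div ((differentiableAt_const 1).sub
          differentiableAt_id) (by simp [sub_ne_zero]; exact hx.2.ne')
    have hFd : DifferentiableAt ℝ F x := by
      have : DifferentiableAt ℝ (fun l => deriv p l - p l * (b / l - a / (1 - l))) x :=
        h1.sub (h2.mul h3)
      exact this.congr_of_eventuallyEq (Eventually.of_forall fun l => (hF l))
    have := hFd.hasDerivAt
    have hgx : deriv F x = g x := by
      have h := heq x hx
      simp only [hg]
      field_simp [hg, hD.ne']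
      linarith
    rwa [hgx] at this
  have hgint : IntegrableOn g (Ioo 0 1) := by
    have : IntegrableOn (fun l => (μ * p l - l * p l) / D) (Ioo 0 1) :=
      (((hpInt.const_mul μ).sub hlpInt).div_const D)
    exact this.congr_fun (fun l _ => by ring) measurableSet_Ioo
  have hii : IntervalIntegrable g volume 0 1 := by
    rw [intervalIntegrable_iff_integrableOn_Ioo_of_le (by norm_num)]
    exact hgint
  have key : ∫ y in (0:ℝ)..1, g y = L - L :=
    intervalIntegral.integral_eq_sub_of_hasDerivAt_of_tendsto (by norm_num) hderiv hii hF0 hF1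
  rw [sub_self] at key
  have key2 : ∫ l in Ioo (0:ℝ) 1, g l = 0 := by
    rw [intervalIntegral.integral_of_le (by norm_num : (0:ℝ) ≤ 1),
      integral_Ioc_eq_integral_Ioo] at key
    exact key
  have hsplit : ∫ l in Ioo (0:ℝ) 1, g l
      = (μ * ∫ l in Ioo (0:ℝ) 1, p l) / D - (∫ l in Ioo (0:ℝ) 1, l * p l) / D := by
    have hge : g = fun l => (μ * p l) / D - (l * p l) / D := funext fun l => by rw [hg]; ring
    rw [hge, integral_sub ((hpInt.const_mul μ).div_const D) (hlpInt.div_const D),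
      integral_div, integral_div, integral_const_mul]
  rw [hsplit] at key2
  have h0 : μ * ∫ l in Ioo (0:ℝ) 1, p l = ∫ l in Ioo (0:ℝ) 1, l * p l := by
    field_simp [hD.ne'] at key2
    linarith
  field_simp
  linarith
end

section
/- Let a > 1 and b ≥ 1 be real numbers, D > 0, μ ∈ ℝ, and q(λ) = λ^b (1−λ)^a. Let t : [0,1] → ℝ be continuously differentiable on [0,1], twice continuously differentiable on (0,1), with t(λ) > 0 for all λ ∈ [0,1], satisfying −D·(q t')'(λ) − λ q(λ) t(λ) = −μ q(λ) t(λ) for all λ ∈ (0,1). Then for every continuously differentiable s : [0,1] → ℝ with ∫₀¹ q s² dλ > 0, one has (∫₀¹ λ q s² dλ − D ∫₀¹ q (s')² dλ) / (∫₀¹ q s² dλ) ≤ μ. That is, the positive eigenfunction t maximizes the Rayleigh quotient −E[s]/Q[s] over all admissible test functions, and the maximum value is μ. -/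
open MeasureTheory Set Filter Topology

/-- Part of Lemma 2 (variational characterization): a positive eigenfunction `t` of
the Sturm–Liouville problem maximizes the Rayleigh quotient `−E[s]/Q[s]` over all
admissible test functions `s`, the maximum value being the eigenvalue `μ`. -/
theorem positive_eigenfunction_maximizes_rayleigh
    (a b D μ : ℝ) (ha : 1 < a) (hb : 1 ≤ b) (hD : 0 < D)
    (q : ℝ → ℝ) (hq : ∀ l, q l = l ^ b * (1 - l) ^ a)
    (t : ℝ → ℝ)
    (ht1 : ContDiffOn ℝ 1 t (Icc 0 1))
    (ht2 : ContDiffOn ℝ 2 t (Ioo 0 1))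
    (htpos : ∀ l ∈ Icc (0:ℝ) 1, 0 < t l)
    (heq : ∀ l ∈ Ioo (0:ℝ) 1,
      -(D * deriv (fun x => q x * deriv t x) l) - l * q l * t l
        = -(μ * q l * t l)) :
    ∀ s : ℝ → ℝ, ContDiffOn ℝ 1 s (Icc 0 1) →
      0 < ∫ l in Ioo (0:ℝ) 1, q l * (s l) ^ 2 →
      ((∫ l in Ioo (0:ℝ) 1, l * q l * (s l) ^ 2)
          - D * ∫ l in Ioo (0:ℝ) 1, q l * (deriv s l) ^ 2)
        / (∫ l in Ioo (0:ℝ) 1, q l * (s l) ^ 2) ≤ μ := by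
  intro s hs hQpos
  have hb0 : (0:ℝ) < b := lt_of_lt_of_le one_pos hb
  have ha0 : (0:ℝ) < a := lt_trans one_pos ha
  have hqfun : q = fun l : ℝ => l ^ b * (1 - l) ^ a := funext hq
  have hqc : Continuous q := by
    rw [hqfun]
    exact (Real.continuous_rpow_const hb0.le).mul
      ((Real.continuous_rpow_const ha0.le).comp (continuous_const.sub continuous_id))
  have hq0 : q 0 = 0 := by rw [hq]; simp [Real.zero_rpow hb0.ne']
  have hq1 : q 1 = 0 := by rw [hq]; simp [Real.zero_rpow ha0.ne']
  have hqnn : ∀ l ∈ Icc (0:ℝ) 1, 0 ≤ q l := by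
    intro l hl
    rw [hq]
    exact mul_nonneg (Real.rpow_nonneg hl.1 _) (Real.rpow_nonneg (by linarith [hl.2]) _)
  set T' := derivWithin t (Icc (0:ℝ) 1) with hT'def
  set S' := derivWithin s (Icc (0:ℝ) 1) with hS'def
  have hud : UniqueDiffOn ℝ (Icc (0:ℝ) 1) := uniqueDiffOn_Icc one_pos
  have hT'c : ContinuousOn T' (Icc 0 1) := ht1.continuousOn_derivWithin hud le_rfl
  have hS'c : ContinuousOn S' (Icc 0 1) := hs.continuousOn_derivWithin hud le_rfl
  have htc : ContinuousOn t (Icc 0 1) := ht1.continuousOn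
  have hsc : ContinuousOn s (Icc 0 1) := hs.continuousOn
  have htne : ∀ l ∈ Icc (0:ℝ) 1, t l ≠ 0 := fun l hl => (htpos l hl).ne'
  have hIoo : Ioo (0:ℝ) 1 ⊆ Icc 0 1 := Ioo_subset_Icc_self
  have hnhds : ∀ l ∈ Ioo (0:ℝ) 1, Icc (0:ℝ) 1 ∈ 𝓝 l := fun l hl => Icc_mem_nhds hl.1 hl.2
  have hT'eq : ∀ l ∈ Ioo (0:ℝ) 1, deriv t l = T' l :=
    fun l hl => (derivWithin_of_mem_nhds (hnhds l hl)).symm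
  have hS'eq : ∀ l ∈ Ioo (0:ℝ) 1, deriv s l = S' l :=
    fun l hl => (derivWithin_of_mem_nhds (hnhds l hl)).symm
  have hsd : ∀ l ∈ Ioo (0:ℝ) 1, HasDerivAt s (S' l) l := fun l hl =>
    ((hs.differentiableOn one_ne_zero l (hIoo hl)).hasDerivWithinAt).hasDerivAt (hnhds l hl)
  have htd : ∀ l ∈ Ioo (0:ℝ) 1, HasDerivAt t (T' l) l := fun l hl =>
    ((ht1.differentiableOn one_ne_zero l (hIoo hl)).hasDerivWithinAt).hasDerivAt (hnhds l hl)
  have ht'd : ∀ l ∈ Ioo (0:ℝ) 1, DifferentiableAt ℝ (deriv t) l := by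
    intro l hl
    have h : ContDiffOn ℝ 1 (deriv t) (Ioo 0 1) :=
      ht2.deriv_of_isOpen isOpen_Ioo (by norm_num)
    exact (h.differentiableOn one_ne_zero l hl).differentiableAt (isOpen_Ioo.mem_nhds hl)
  have hqd : ∀ l ∈ Ioo (0:ℝ) 1, DifferentiableAt ℝ q l := by
    intro l hl
    rw [hqfun]
    have h1 : HasDerivAt (fun x : ℝ => x ^ b) (b * l ^ (b - 1)) l :=
      Real.hasDerivAt_rpow_const (Or.inl hl.1.ne')
    have h0 : HasDerivAt (fun x : ℝ => 1 - x) (-1) l := (hasDerivAt_id l).const_sub 1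
    have h2 := h0.rpow_const (p := a) (Or.inl (by simp; linarith [hl.2]))
    exact (h1.mul h2).differentiableAt
  -- the Picone auxiliary function and its derivative
  set G : ℝ → ℝ := fun x => D * (q x * deriv t x * ((s x) ^ 2 / t x)) with hGdef
  set g : ℝ → ℝ := fun l =>
    D * ((μ - l) * q l * t l / D * ((s l) ^ 2 / t l)
      + q l * T' l * ((2 * s l * S' l * t l - (s l) ^ 2 * T' l) / (t l) ^ 2)) with hgdef
  set r : ℝ → ℝ := fun l => D * (q l * (S' l - T' l * s l / t l) ^ 2) with hrdef
  have hGderiv : ∀ l ∈ Ioo (0:ℝ) 1, HasDerivAt G (g l) l := by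
    intro l hl
    have htl := htne l (hIoo hl)
    have h1 : DifferentiableAt ℝ (fun x => q x * deriv t x) l := (hqd l hl).mul (ht'd l hl)
    have hP : deriv (fun x => q x * deriv t x) l = (μ - l) * q l * t l / D := by
      have h := heq l hl
      rw [eq_div_iff hD.ne']
      nlinarith [h]
    have h1' : HasDerivAt (fun x => q x * deriv t x) ((μ - l) * q l * t l / D) l :=
      hP ▸ h1.hasDerivAt
    have h2 : HasDerivAt (fun x => (s x) ^ 2 / t x)
        ((2 * s l * S' l * t l - (s l) ^ 2 * T' l) / (t l) ^ 2) l := by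
      have := ((hsd l hl).fun_pow 2).fun_div (htd l hl) htl
      refine this.congr_deriv ?_
      norm_num
    have key := (h1'.mul h2).const_mul D
    have hval : g l = D * ((μ - l) * q l * t l / D * ((s l) ^ 2 / t l)
        + q l * deriv t l * ((2 * s l * S' l * t l - (s l) ^ 2 * T' l) / (t l) ^ 2)) := by
      rw [hT'eq l hl]
    rw [hval]
    exact key
  -- continuity of the pieces
  have hgcont : ContinuousOn g (Icc 0 1) := by
    apply continuousOn_const.mul
    apply ContinuousOn.add
    · exact ((((continuousOn_const.sub continuousOn_id).mul hqc.continuousOn).mul htc).div_const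
        D).mul ((hsc.pow 2).div htc htne)
    · exact (hqc.continuousOn.mul hT'c).mul
        (((((continuousOn_const.mul hsc).mul hS'c).mul htc).sub
          ((hsc.pow 2).mul hT'c)).div (htc.pow 2) (fun x hx => pow_ne_zero 2 (htne x hx)))
  have hrcont : ContinuousOn r (Icc 0 1) := by
    apply continuousOn_const.mul
    exact hqc.continuousOn.mul
      ((hS'c.sub ((hT'c.mul hsc).div htc htne)).pow 2)
  set Gc : ℝ → ℝ := fun x => D * (q x * T' x * ((s x) ^ 2 / t x)) with hGcdef
  have hGccont : ContinuousOn Gc (Icc 0 1) :=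
    continuousOn_const.mul ((hqc.continuousOn.mul hT'c).mul ((hsc.pow 2).div htc htne))
  have hGeqGc : ∀ l ∈ Ioo (0:ℝ) 1, G l = Gc l := by
    intro l hl
    simp only [hGdef, hGcdef, hT'eq l hl]
  have hIooMem0 : Ioo (0:ℝ) 1 ∈ 𝓝[>] (0:ℝ) :=
    Ioo_mem_nhdsGT_of_mem (by constructor <;> norm_num)
  have hIooMem1 : Ioo (0:ℝ) 1 ∈ 𝓝[<] (1:ℝ) :=
    Ioo_mem_nhdsLT_of_mem (by constructor <;> norm_num)
  have htend0 : Tendsto G (𝓝[>] (0:ℝ)) (𝓝 0) := by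
    have h1 : Tendsto Gc (𝓝[Icc (0:ℝ) 1] 0) (𝓝 0) := by
      have h := hGccont 0 (left_mem_Icc.2 zero_le_one)
      have h0 : Gc 0 = 0 := by simp [hGcdef, hq0]
      rw [ContinuousWithinAt, h0] at h
      exact h
    have h2 : 𝓝[>] (0:ℝ) ≤ 𝓝[Icc (0:ℝ) 1] 0 :=
      le_trans (nhdsWithin_le_of_mem hIooMem0) (nhdsWithin_mono _ hIoo)
    exact Tendsto.congr' (by filter_upwards [hIooMem0] with x hx using (hGeqGc x hx).symm)
      (h1.mono_left h2)
  have htend1 : Tendsto G (𝓝[<] (1:ℝ)) (𝓝 0) := by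
    have h1 : Tendsto Gc (𝓝[Icc (0:ℝ) 1] 1) (𝓝 0) := by
      have h := hGccont 1 (right_mem_Icc.2 zero_le_one)
      have h0 : Gc 1 = 0 := by simp [hGcdef, hq1]
      rw [ContinuousWithinAt, h0] at h
      exact h
    have h2 : 𝓝[<] (1:ℝ) ≤ 𝓝[Icc (0:ℝ) 1] 1 :=
      le_trans (nhdsWithin_le_of_mem hIooMem1) (nhdsWithin_mono _ hIoo)
    exact Tendsto.congr' (by filter_upwards [hIooMem1] with x hx using (hGeqGc x hx).symm)
      (h1.mono_left h2)
  have hgint : IntervalIntegrable g volume 0 1 := by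
    apply ContinuousOn.intervalIntegrable
    rwa [uIcc_of_le zero_le_one]
  have hFTC : ∫ l in (0:ℝ)..1, g l = 0 := by
    rw [intervalIntegral.integral_eq_sub_of_hasDerivAt_of_tendsto zero_lt_one hGderiv hgint
      htend0 htend1]
    ring
  have hgIoo : ∫ l in Ioo (0:ℝ) 1, g l = 0 := by
    rw [← MeasureTheory.integral_Ioc_eq_integral_Ioo,
      ← intervalIntegral.integral_of_le zero_le_one]
    exact hFTC
  -- integrability
  have hInt : ∀ f : ℝ → ℝ, ContinuousOn f (Icc 0 1) → IntegrableOn f (Ioo (0:ℝ) 1) :=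
    fun f hf => (hf.integrableOn_Icc).mono_set hIoo
  have hInt1 : IntegrableOn (fun l => l * q l * (s l) ^ 2) (Ioo (0:ℝ) 1) :=
    hInt _ (((continuousOn_id.mul hqc.continuousOn)).mul (hsc.pow 2))
  have hInt2 : IntegrableOn (fun l => q l * (S' l) ^ 2) (Ioo (0:ℝ) 1) :=
    hInt _ (hqc.continuousOn.mul (hS'c.pow 2))
  have hInt3 : IntegrableOn (fun l => q l * (s l) ^ 2) (Ioo (0:ℝ) 1) :=
    hInt _ (hqc.continuousOn.mul (hsc.pow 2))
  have hIntg : IntegrableOn g (Ioo (0:ℝ) 1) := hInt _ hgcont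
  have hIntr : IntegrableOn r (Ioo (0:ℝ) 1) := hInt _ hrcont
  have hrnn : 0 ≤ ∫ l in Ioo (0:ℝ) 1, r l := by
    apply setIntegral_nonneg measurableSet_Ioo
    intro l hl
    exact mul_nonneg hD.le (mul_nonneg (hqnn l (hIoo hl)) (sq_nonneg _))
  -- pointwise Picone identity
  have hpoint : ∀ l ∈ Ioo (0:ℝ) 1,
      l * q l * (s l) ^ 2 - D * (q l * (S' l) ^ 2) - μ * (q l * (s l) ^ 2)
        = -g l - r l := by
    intro l hl
    have htl := htne l (hIoo hl)
    simp only [hgdef, hrdef]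
    field_simp
    ring
  -- put everything together
  have hcongrS : ∫ l in Ioo (0:ℝ) 1, q l * (deriv s l) ^ 2
      = ∫ l in Ioo (0:ℝ) 1, q l * (S' l) ^ 2 :=
    setIntegral_congr_fun measurableSet_Ioo (fun l hl => by rw [hS'eq l hl])
  have hsum : ∫ l in Ioo (0:ℝ) 1,
      (l * q l * (s l) ^ 2 - D * (q l * (S' l) ^ 2) - μ * (q l * (s l) ^ 2))
      = ∫ l in Ioo (0:ℝ) 1, (-g l - r l) :=
    setIntegral_congr_fun measurableSet_Ioo hpoint
  have hI12 : IntegrableOn (fun l => l * q l * (s l) ^ 2 - D * (q l * (S' l) ^ 2))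
      (Ioo (0:ℝ) 1) := hInt1.sub (hInt2.const_mul D)
  have hIDg : IntegrableOn (fun l => D * (q l * (S' l) ^ 2)) (Ioo (0:ℝ) 1) :=
    hInt2.const_mul D
  have hIMu : IntegrableOn (fun l => μ * (q l * (s l) ^ 2)) (Ioo (0:ℝ) 1) :=
    hInt3.const_mul μ
  have hIng : IntegrableOn (fun l => -g l) (Ioo (0:ℝ) 1) := hIntg.neg
  rw [integral_sub hI12 hIMu, integral_sub hInt1 hIDg, integral_const_mul,
    integral_const_mul] at hsum
  rw [integral_sub hIng hIntr, integral_neg, hgIoo] at hsum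
  rw [div_le_iff₀ hQpos, hcongrS]
  linarith [hrnn, hsum]
end

section
/- Let a > 1 and b ≥ 1 be real numbers, D > 0, and q(λ) = λ^b (1−λ)^a. Suppose t₁, t₂ : [0,1] → ℝ are both continuously differentiable on [0,1], twice continuously differentiable on (0,1), strictly positive on [0,1], and satisfy −D·(q tᵢ')' − λ q tᵢ = −μᵢ q tᵢ on (0,1) for real numbers μ₁, μ₂ respectively, with ∫₀¹ q tᵢ² dλ > 0 for i = 1,2. Then μ₁ = μ₂. In other words, the eigenvalue associated with a positive eigenfunction of the Sturm–Liouville problem is unique. -/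
open MeasureTheory Set Filter

/-- Theorem 1(i) (uniqueness part): the eigenvalue of the Sturm–Liouville problem
associated with a positive eigenfunction is unique. -/
theorem positive_eigenvalue_unique
    (a b D μ₁ μ₂ : ℝ) (ha : 1 < a) (hb : 1 ≤ b) (hD : 0 < D)
    (q : ℝ → ℝ) (hq : ∀ l, q l = l ^ b * (1 - l) ^ a)
    (t₁ t₂ : ℝ → ℝ)
    (ht₁1 : ContDiffOn ℝ 1 t₁ (Icc 0 1))
    (ht₁2 : ContDiffOn ℝ 2 t₁ (Ioo 0 1))
    (ht₁pos : ∀ l ∈ Icc (0:ℝ) 1, 0 < t₁ l)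
    (heq₁ : ∀ l ∈ Ioo (0:ℝ) 1,
      -(D * deriv (fun x => q x * deriv t₁ x) l) - l * q l * t₁ l
        = -(μ₁ * q l * t₁ l))
    (hQ₁ : 0 < ∫ l in Ioo (0:ℝ) 1, q l * (t₁ l) ^ 2)
    (ht₂1 : ContDiffOn ℝ 1 t₂ (Icc 0 1))
    (ht₂2 : ContDiffOn ℝ 2 t₂ (Ioo 0 1))
    (ht₂pos : ∀ l ∈ Icc (0:ℝ) 1, 0 < t₂ l)
    (heq₂ : ∀ l ∈ Ioo (0:ℝ) 1,
      -(D * deriv (fun x => q x * deriv t₂ x) l) - l * q l * t₂ l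
        = -(μ₂ * q l * t₂ l))
    (hQ₂ : 0 < ∫ l in Ioo (0:ℝ) 1, q l * (t₂ l) ^ 2) :
    μ₁ = μ₂ := by
  have hb0 : (0:ℝ) < b := lt_of_lt_of_le zero_lt_one hb
  have ha0 : (0:ℝ) < a := lt_trans zero_lt_one ha
  -- continuity of q on [0,1]
  have hqc : ContinuousOn q (Icc 0 1) := by
    have h1 : ContinuousOn (fun l : ℝ => l ^ b * (1 - l) ^ a) (Icc 0 1) := by
      apply ContinuousOn.mul
      · exact continuousOn_id.rpow_const (fun x _ => Or.inr hb0.le)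
      · exact (continuousOn_const.sub continuousOn_id).rpow_const (fun x _ => Or.inr ha0.le)
    exact h1.congr (fun l _ => hq l)
  -- q vanishes at endpoints
  have hq0 : q 0 = 0 := by rw [hq]; simp [Real.zero_rpow hb0.ne']
  have hq1 : q 1 = 0 := by rw [hq]; simp [Real.zero_rpow ha0.ne']
  -- q positive on (0,1)
  have hqpos : ∀ l ∈ Ioo (0:ℝ) 1, 0 < q l := by
    intro l hl
    rw [hq]
    exact mul_pos (Real.rpow_pos_of_pos hl.1 b)
      (Real.rpow_pos_of_pos (by linarith [hl.2]) a)
  -- q differentiable on (0,1)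
  have hqd : ∀ l ∈ Ioo (0:ℝ) 1, DifferentiableAt ℝ q l := by
    intro l hl
    have h1 : DifferentiableAt ℝ (fun x : ℝ => x ^ b) l :=
      (Real.hasDerivAt_rpow_const (Or.inl hl.1.ne')).differentiableAt
    have h2 : DifferentiableAt ℝ (fun x : ℝ => (1 - x) ^ a) l := by
      have hs : HasDerivAt (fun x : ℝ => (1:ℝ) - x) (0 - 1) l :=
        (hasDerivAt_const l (1:ℝ)).sub (hasDerivAt_id l)
      exact (hs.rpow_const (Or.inl (by have := hl.2; intro h; linarith [sub_eq_zero.mp h]))).differentiableAt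
    have : DifferentiableAt ℝ (fun l : ℝ => l ^ b * (1 - l) ^ a) l := h1.mul h2
    exact this.congr_of_eventuallyEq (Eventually.of_forall (fun x => hq x))
  -- derivatives of t₁, t₂ within Icc
  set g₁ : ℝ → ℝ := derivWithin t₁ (Icc 0 1) with hg₁def
  set g₂ : ℝ → ℝ := derivWithin t₂ (Icc 0 1) with hg₂def
  set W : ℝ → ℝ := fun l => q l * (t₂ l * g₁ l - t₁ l * g₂ l) with hWdef
  have hg₁c : ContinuousOn g₁ (Icc 0 1) :=
    ht₁1.continuousOn_derivWithin (uniqueDiffOn_Icc zero_lt_one) le_rfl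
  have hg₂c : ContinuousOn g₂ (Icc 0 1) :=
    ht₂1.continuousOn_derivWithin (uniqueDiffOn_Icc zero_lt_one) le_rfl
  have hWc : ContinuousOn W (Icc 0 1) :=
    hqc.mul (((ht₂1.continuousOn).mul hg₁c).sub ((ht₁1.continuousOn).mul hg₂c))
  set c : ℝ := (μ₁ - μ₂) / D with hcdef
  -- the key derivative computation
  have key : ∀ l ∈ Ioo (0:ℝ) 1, HasDerivAt W (c * (q l * (t₁ l * t₂ l))) l := by
    intro l hl
    have hIoo : Ioo (0:ℝ) 1 ∈ nhds l := isOpen_Ioo.mem_nhds hl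
    have hIcc : Icc (0:ℝ) 1 ∈ nhds l := Icc_mem_nhds hl.1 hl.2
    -- differentiability of t₁, t₂ and their derivatives at l
    have ht₁d : HasDerivAt t₁ (deriv t₁ l) l :=
      ((ht₁2.contDiffAt hIoo).differentiableAt (by norm_num)).hasDerivAt
    have ht₂d : HasDerivAt t₂ (deriv t₂ l) l :=
      ((ht₂2.contDiffAt hIoo).differentiableAt (by norm_num)).hasDerivAt
    have hdt₁ : DifferentiableAt ℝ (deriv t₁) l :=
      (((ht₁2.deriv_of_isOpen (m := 1) isOpen_Ioo (by norm_num)).contDiffAt hIoo).differentiableAt one_ne_zero)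
    have hdt₂ : DifferentiableAt ℝ (deriv t₂) l :=
      (((ht₂2.deriv_of_isOpen (m := 1) isOpen_Ioo (by norm_num)).contDiffAt hIoo).differentiableAt one_ne_zero)
    have hF₁d : DifferentiableAt ℝ (fun x => q x * deriv t₁ x) l := (hqd l hl).mul hdt₁
    have hF₂d : DifferentiableAt ℝ (fun x => q x * deriv t₂ x) l := (hqd l hl).mul hdt₂
    have hF₁ : HasDerivAt (fun x => q x * deriv t₁ x)
        (deriv (fun x => q x * deriv t₁ x) l) l := hF₁d.hasDerivAt
    have hF₂ : HasDerivAt (fun x => q x * deriv t₂ x)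
        (deriv (fun x => q x * deriv t₂ x) l) l := hF₂d.hasDerivAt
    -- values of the derivatives from the ODEs
    have hd₁ : deriv (fun x => q x * deriv t₁ x) l = (μ₁ - l) * (q l * t₁ l) / D := by
      have h := heq₁ l hl
      field_simp
      nlinarith [h]
    have hd₂ : deriv (fun x => q x * deriv t₂ x) l = (μ₂ - l) * (q l * t₂ l) / D := by
      have h := heq₂ l hl
      field_simp
      nlinarith [h]
    -- derivative of the Wronskian-type function
    have hV : HasDerivAt (fun x => t₂ x * (q x * deriv t₁ x) - t₁ x * (q x * deriv t₂ x))
        (deriv t₂ l * (q l * deriv t₁ l) + t₂ l * deriv (fun x => q x * deriv t₁ x) l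
          - (deriv t₁ l * (q l * deriv t₂ l) + t₁ l * deriv (fun x => q x * deriv t₂ x) l)) l :=
      (ht₂d.mul hF₁).sub (ht₁d.mul hF₂)
    have hval : deriv t₂ l * (q l * deriv t₁ l) + t₂ l * deriv (fun x => q x * deriv t₁ x) l
          - (deriv t₁ l * (q l * deriv t₂ l) + t₁ l * deriv (fun x => q x * deriv t₂ x) l)
        = c * (q l * (t₁ l * t₂ l)) := by
      rw [hd₁, hd₂, hcdef]
      field_simp
      ring
    rw [hval] at hV
    refine hV.congr_of_eventuallyEq ?_
    filter_upwards [hIoo] with x hx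
    have hIccx : Icc (0:ℝ) 1 ∈ nhds x := Icc_mem_nhds hx.1 hx.2
    have e₁ : g₁ x = deriv t₁ x := derivWithin_of_mem_nhds hIccx
    have e₂ : g₂ x = deriv t₂ x := derivWithin_of_mem_nhds hIccx
    simp only [hWdef, e₁, e₂]
    ring
  -- integrability
  have hIcc_cont : ContinuousOn (fun x => c * (q x * (t₁ x * t₂ x))) (Icc 0 1) :=
    continuousOn_const.mul (hqc.mul ((ht₁1.continuousOn).mul (ht₂1.continuousOn)))
  have hInt : IntervalIntegrable (fun x => c * (q x * (t₁ x * t₂ x))) volume 0 1 := by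
    apply ContinuousOn.intervalIntegrable
    rwa [uIcc_of_le zero_le_one]
  -- FTC
  have hFTC : ∫ x in (0:ℝ)..1, c * (q x * (t₁ x * t₂ x)) = W 1 - W 0 :=
    intervalIntegral.integral_eq_sub_of_hasDeriv_right_of_le zero_le_one hWc
      (fun x hx => (key x hx).hasDerivWithinAt) hInt
  have hW0 : W 0 = 0 := by simp [hWdef, hq0]
  have hW1 : W 1 = 0 := by simp [hWdef, hq1]
  rw [hW0, hW1, sub_zero, intervalIntegral.integral_const_mul] at hFTC
  -- positivity of the cross integral
  have hIntg : IntervalIntegrable (fun x => q x * (t₁ x * t₂ x)) volume 0 1 := by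
    apply ContinuousOn.intervalIntegrable
    rw [uIcc_of_le zero_le_one]
    exact hqc.mul ((ht₁1.continuousOn).mul (ht₂1.continuousOn))
  have hpos : 0 < ∫ x in (0:ℝ)..1, q x * (t₁ x * t₂ x) := by
    apply intervalIntegral.intervalIntegral_pos_of_pos_on hIntg _ zero_lt_one
    intro x hx
    exact mul_pos (hqpos x hx)
      (mul_pos (ht₁pos x (Ioo_subset_Icc_self hx)) (ht₂pos x (Ioo_subset_Icc_self hx)))
  have hc : c = 0 := by
    rcases mul_eq_zero.mp hFTC with h | h
    · exact h
    · exact absurd h hpos.ne'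
  have : μ₁ - μ₂ = 0 := by
    rw [hcdef] at hc
    field_simp at hc
    simpa using hc
  linarith
end

section
/- Let a > 1 and b ≥ 0 be real numbers and q(λ) = λ^b (1−λ)^a. There exist constants κ > 0 and D₀ ∈ (0,1] such that for every D ∈ (0, D₀), the Gaussian test function t_D(λ) = exp(−(λ − 1 + D^{1/3})² / (2 D^{2/3})) satisfies ∫₀¹ q t_D² dλ > 0 and (∫₀¹ λ q t_D² dλ − D ∫₀¹ q (t_D')² dλ) / (∫₀¹ q t_D² dλ) ≥ 1 − κ D^{1/3}. -/
open MeasureTheory Set Filter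

lemma rpow_exp_le (c : ℝ) (hc : 0 < c) (u : ℝ) (hu : 0 ≤ u) :
    u ^ c * Real.exp (-u) ≤ c ^ c * Real.exp (-c) := by
  rcases eq_or_lt_of_le hu with h | h
  · rw [← h, Real.zero_rpow hc.ne', zero_mul]
    positivity
  · rw [Real.rpow_def_of_pos h, Real.rpow_def_of_pos hc, ← Real.exp_add, ← Real.exp_add,
      Real.exp_le_exp]
    have hlog := Real.log_le_sub_one_of_pos (show (0:ℝ) < u / c by positivity)
    rw [Real.log_div h.ne' hc.ne'] at hlog
    have h2 : c * (Real.log u - Real.log c) ≤ c * (u / c - 1) :=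
      mul_le_mul_of_nonneg_left hlog hc.le
    have h3 : c * (u / c) = u := by field_simp
    nlinarith [h2]

lemma key_bound (c : ℝ) (hc : 0 < c) (u : ℝ) (hu : 0 ≤ u) :
    u ^ c * Real.exp (-(u - 1) ^ 2) ≤ (c ^ c * Real.exp (-c) * Real.exp 3) * Real.exp (-u) := by
  have h1 : u ^ c * Real.exp (-(u - 1) ^ 2) =
      (u ^ c * Real.exp (-u)) * Real.exp (u - (u - 1) ^ 2) := by
    rw [mul_assoc, ← Real.exp_add]; ring_nf
  rw [h1]
  have h2 : Real.exp (u - (u - 1) ^ 2) ≤ Real.exp 3 * Real.exp (-u) := by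
    rw [← Real.exp_add, Real.exp_le_exp]; nlinarith [sq_nonneg (u - 2)]
  have h3 := rpow_exp_le c hc u hu
  calc (u ^ c * Real.exp (-u)) * Real.exp (u - (u - 1) ^ 2)
      ≤ (c ^ c * Real.exp (-c)) * (Real.exp 3 * Real.exp (-u)) := by
        apply mul_le_mul h3 h2 (Real.exp_pos _).le (by positivity)
    _ = (c ^ c * Real.exp (-c) * Real.exp 3) * Real.exp (-u) := by ring

lemma integrableOn_of_bound (f : ℝ → ℝ) (hf : ContinuousOn f (Ioo 0 1)) (C : ℝ)
    (hC : ∀ x ∈ Ioo (0:ℝ) 1, |f x| ≤ C) : IntegrableOn f (Ioo 0 1) := by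
  refine ⟨hf.aestronglyMeasurable measurableSet_Ioo, ?_⟩
  apply MeasureTheory.HasFiniteIntegral.of_bounded (C := C)
  exact (ae_restrict_iff' measurableSet_Ioo).2 (Filter.Eventually.of_forall hC)

lemma exp_integral_le (σ : ℝ) (hσ : 0 < σ) :
    ∫ l in Ioo (0:ℝ) 1, Real.exp ((l - 1) / σ) ≤ σ := by
  have hderiv : ∀ x ∈ Set.uIcc (0:ℝ) 1, HasDerivAt (fun l => σ * Real.exp ((l - 1) / σ))
      (Real.exp ((x - 1) / σ)) x := by
    intro x _
    have h1 : HasDerivAt (fun l : ℝ => (l - 1) / σ) (1 / σ) x :=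
      ((hasDerivAt_id x).sub_const 1).div_const σ
    have h2 := (h1.exp).const_mul σ
    refine h2.congr_deriv ?_
    rw [mul_comm (Real.exp _), ← mul_assoc, mul_one_div_cancel hσ.ne', one_mul]
  have hint : IntervalIntegrable (fun x => Real.exp ((x - 1) / σ)) volume 0 1 :=
    (Real.continuous_exp.comp (by continuity)).intervalIntegrable 0 1
  have heq := intervalIntegral.integral_eq_sub_of_hasDerivAt hderiv hint
  have h0 : (∫ l in Ioo (0:ℝ) 1, Real.exp ((l - 1) / σ)) =
      ∫ l in (0:ℝ)..1, Real.exp ((l - 1) / σ) := by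
    rw [intervalIntegral.integral_of_le zero_le_one, MeasureTheory.integral_Ioc_eq_integral_Ioo]
  rw [h0, heq]
  have e1 : Real.exp ((1 - 1) / σ) = 1 := by norm_num
  have e2 : 0 < Real.exp ((0 - 1) / σ) := Real.exp_pos _
  nlinarith

set_option maxHeartbeats 2000000 in
/-- Best Gaussian approximation (Appendix): the Gaussian test function centered at
`1 − D^{1/3}` with standard deviation `D^{1/3}` gives a Rayleigh quotient at least
`1 − κ D^{1/3}` for all small `D`. -/
theorem gaussian_rayleigh_lower_bound
    (a b : ℝ) (ha : 1 < a) (hb : 0 ≤ b)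
    (q : ℝ → ℝ) (hq : ∀ l, q l = l ^ b * (1 - l) ^ a) :
    ∃ κ : ℝ, 0 < κ ∧ ∃ D₀ ∈ Ioc (0:ℝ) 1, ∀ D ∈ Ioo (0:ℝ) D₀,
      ∀ t : ℝ → ℝ,
        (∀ l, t l = Real.exp (-(l - 1 + D ^ ((1:ℝ)/3)) ^ 2
            / (2 * D ^ ((2:ℝ)/3)))) →
        (0 < ∫ l in Ioo (0:ℝ) 1, q l * (t l) ^ 2) ∧
        1 - κ * D ^ ((1:ℝ)/3) ≤
          ((∫ l in Ioo (0:ℝ) 1, l * q l * (t l) ^ 2)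
              - D * ∫ l in Ioo (0:ℝ) 1, q l * (deriv t l) ^ 2)
            / (∫ l in Ioo (0:ℝ) 1, q l * (t l) ^ 2) := by
  have ha0 : (0:ℝ) < a := by linarith
  set M0 : ℝ := a ^ a * Real.exp (-a) * Real.exp 3 with hM0def
  set M1 : ℝ := (a+1) ^ (a+1) * Real.exp (-(a+1)) * Real.exp 3 with hM1def
  set M2 : ℝ := (a+2) ^ (a+2) * Real.exp (-(a+2)) * Real.exp 3 with hM2def
  have hM0 : 0 < M0 := by
    have := Real.rpow_pos_of_pos ha0 a; positivity
  have hM1 : 0 < M1 := by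
    have := Real.rpow_pos_of_pos (show (0:ℝ) < a+1 by linarith) (a+1); positivity
  have hM2 : 0 < M2 := by
    have := Real.rpow_pos_of_pos (show (0:ℝ) < a+2 by linarith) (a+2); positivity
  set M : ℝ := M0 + M1 + M2 with hMdef
  have hM : 0 < M := by positivity
  set c : ℝ := (1/2:ℝ) ^ b * Real.exp (-1) * (1/2:ℝ) ^ (a+1) with hcdef
  have hc : 0 < c := by
    have h1 := Real.rpow_pos_of_pos (show (0:ℝ) < 1/2 by norm_num) b
    have h2 := Real.rpow_pos_of_pos (show (0:ℝ) < 1/2 by norm_num) (a+1)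
    positivity
  refine ⟨2*M/c, by positivity, 1/8, ⟨by norm_num, by norm_num⟩, ?_⟩
  intro D hD t ht
  obtain ⟨hD0, hD8⟩ := hD
  set σ : ℝ := D ^ ((1:ℝ)/3) with hσdef
  have hσ : 0 < σ := Real.rpow_pos_of_pos hD0 _
  have hσhalf : σ < 1/2 := by
    have h1 : σ < (1/8:ℝ) ^ ((1:ℝ)/3) := by
      rw [hσdef]
      exact Real.rpow_lt_rpow hD0.le hD8 (by norm_num)
    have h2 : ((1/8:ℝ)) ^ ((1:ℝ)/3) = 1/2 := by
      rw [show (1/8:ℝ) = (1/2:ℝ) ^ (3:ℕ) by norm_num,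
        ← Real.rpow_natCast ((1:ℝ)/2) 3, ← Real.rpow_mul (by norm_num)]
      norm_num
    linarith
  have hs2 : D ^ ((2:ℝ)/3) = σ ^ 2 := by
    rw [hσdef, ← Real.rpow_natCast (D ^ ((1:ℝ)/3)) 2, ← Real.rpow_mul hD0.le]
    norm_num
  have hs3 : σ ^ 3 = D := by
    rw [hσdef, ← Real.rpow_natCast (D ^ ((1:ℝ)/3)) 3, ← Real.rpow_mul hD0.le]
    norm_num
  simp only [hs2] at ht
  have htfun : t = fun l => Real.exp (-(l - 1 + σ) ^ 2 / (2 * σ ^ 2)) := funext ht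
  -- squared Gaussian
  have ht2g : ∀ x : ℝ, t x ^ 2 = Real.exp (-(x - 1 + σ) ^ 2 / σ ^ 2) := by
    intro x
    rw [ht x, sq, ← Real.exp_add]
    congr 1
    field_simp
    ring
  have ht01 : ∀ x : ℝ, 0 < t x ∧ t x ≤ 1 := by
    intro x
    rw [ht x]
    refine ⟨Real.exp_pos _, Real.exp_le_one_iff.2 ?_⟩
    apply div_nonpos_of_nonpos_of_nonneg (neg_nonpos.2 (sq_nonneg _)) (by positivity)
  have hq01 : ∀ x ∈ Ioo (0:ℝ) 1, 0 ≤ q x ∧ q x ≤ 1 := by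
    intro x hx
    rw [hq x]
    have h1 : 0 ≤ x ^ b := Real.rpow_nonneg hx.1.le b
    have h2 : x ^ b ≤ 1 := Real.rpow_le_one hx.1.le hx.2.le hb
    have h3 : 0 ≤ (1-x) ^ a := Real.rpow_nonneg (by linarith [hx.2]) a
    have h4 : (1-x) ^ a ≤ 1 := Real.rpow_le_one (by linarith [hx.2]) (by linarith [hx.1]) ha0.le
    exact ⟨mul_nonneg h1 h3, by nlinarith⟩
  have ht2le : ∀ x : ℝ, t x ^ 2 ≤ 1 := by
    intro x
    nlinarith [(ht01 x).1, (ht01 x).2]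
  -- continuity
  have hqcont : ContinuousOn q (Ioo 0 1) := by
    have h : ContinuousOn (fun l : ℝ => l ^ b * (1 - l) ^ a) (Ioo 0 1) := by
      apply ContinuousOn.mul
      · exact ContinuousOn.rpow_const continuousOn_id (fun x _ => Or.inr hb)
      · exact ContinuousOn.rpow_const (continuousOn_const.sub continuousOn_id)
          (fun x _ => Or.inr ha0.le)
    exact (funext hq ▸ h)
  have htcont : Continuous t := by
    rw [htfun]
    exact Real.continuous_exp.comp (by fun_prop)
  -- integrability
  have hcont1 : Continuous (fun l : ℝ => (l - 1 + σ) ^ 2) := by fun_prop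
  have hcont2 : Continuous (fun l : ℝ => (1:ℝ) - l) := by fun_prop
  have hIA : IntegrableOn (fun l => q l * t l ^ 2) (Ioo 0 1) := by
    refine integrableOn_of_bound (fun l => q l * t l ^ 2)
      (hqcont.mul (htcont.pow 2).continuousOn) 1 ?_
    intro x hx
    show |q x * t x ^ 2| ≤ 1
    rw [abs_of_nonneg (mul_nonneg (hq01 x hx).1 (sq_nonneg _))]
    nlinarith [(hq01 x hx).1, (hq01 x hx).2, ht2le x, sq_nonneg (t x)]
  have hIB : IntegrableOn (fun l => (1-l) * (q l * t l ^ 2)) (Ioo 0 1) := by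
    refine integrableOn_of_bound (fun l => (1-l) * (q l * t l ^ 2))
      (hcont2.continuousOn.mul (hqcont.mul (htcont.pow 2).continuousOn)) 1 ?_
    intro x hx
    show |(1-x) * (q x * t x ^ 2)| ≤ 1
    have h1 : 0 ≤ q x * t x ^ 2 := mul_nonneg (hq01 x hx).1 (sq_nonneg _)
    have h2 : q x * t x ^ 2 ≤ 1 := by
      nlinarith [(hq01 x hx).1, (hq01 x hx).2, ht2le x, sq_nonneg (t x)]
    rw [abs_of_nonneg (mul_nonneg (by linarith [hx.2]) h1)]
    calc (1-x) * (q x * t x ^ 2) ≤ 1 * 1 :=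
          mul_le_mul (by linarith [hx.1]) h2 h1 zero_le_one
      _ = 1 := mul_one 1
  have hIC : IntegrableOn (fun l => q l * (l - 1 + σ) ^ 2 * t l ^ 2) (Ioo 0 1) := by
    refine integrableOn_of_bound (fun l => q l * (l - 1 + σ) ^ 2 * t l ^ 2)
      ((hqcont.mul hcont1.continuousOn).mul (htcont.pow 2).continuousOn) 1 ?_
    intro x hx
    show |q x * (x - 1 + σ) ^ 2 * t x ^ 2| ≤ 1
    have h1 : 0 ≤ q x := (hq01 x hx).1
    have h2 : q x ≤ 1 := (hq01 x hx).2
    have h3 : (x - 1 + σ) ^ 2 ≤ 1 := by nlinarith [hx.1, hx.2]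
    rw [abs_of_nonneg (mul_nonneg (mul_nonneg h1 (sq_nonneg _)) (sq_nonneg _))]
    calc q x * (x - 1 + σ) ^ 2 * t x ^ 2 ≤ (1*1)*1 := by
          apply mul_le_mul (mul_le_mul h2 h3 (sq_nonneg _) zero_le_one) (ht2le x)
            (sq_nonneg _) (by norm_num)
      _ = 1 := by norm_num
  have hIE : IntegrableOn (fun l => Real.exp ((l - 1)/σ)) (Ioo 0 1) := by
    refine integrableOn_of_bound (fun l => Real.exp ((l - 1)/σ))
      (Real.continuous_exp.comp (by fun_prop)).continuousOn 1 ?_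
    intro x hx
    show |Real.exp ((x - 1)/σ)| ≤ 1
    rw [abs_of_nonneg (Real.exp_nonneg _)]
    apply Real.exp_le_one_iff.2
    apply div_nonpos_of_nonpos_of_nonneg (by linarith [hx.2]) hσ.le
  -- pointwise bounds
  have hpt : ∀ l ∈ Ioo (0:ℝ) 1,
      (1-l) * (q l * t l ^ 2) ≤ (M * σ ^ (a+1)) * Real.exp ((l-1)/σ) ∧
      q l * (l - 1 + σ) ^ 2 * t l ^ 2 ≤ (M * σ ^ (a+2)) * Real.exp ((l-1)/σ) := by
    intro l hl
    obtain ⟨hl0, hl1⟩ := hl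
    set u : ℝ := (1-l)/σ with hudef
    have hu : 0 < u := div_pos (by linarith) hσ
    have h1l : 1 - l = σ * u := by rw [hudef]; field_simp
    have hlc : l - 1 + σ = σ * (1 - u) := by linear_combination -h1l
    have hP2 : t l ^ 2 = Real.exp (-(u-1)^2) := by
      rw [ht2g l]
      congr 1
      rw [hlc]
      field_simp
      ring
    have hqa : (1-l) ^ a = σ ^ a * u ^ a := by
      rw [h1l, Real.mul_rpow hσ.le hu.le]
    have hne : σ * u ≠ 0 := by positivity
    have h1la : (1-l) * (1-l) ^ a = σ ^ (a+1) * u ^ (a+1) := by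
      rw [h1l, mul_comm (σ*u) ((σ*u) ^ a), ← Real.rpow_add_one hne, Real.mul_rpow hσ.le hu.le]
    have hlb : l ^ b ≤ 1 := Real.rpow_le_one hl0.le hl1.le hb
    have hlb0 : 0 ≤ l ^ b := Real.rpow_nonneg hl0.le b
    have hEeq : Real.exp (-u) = Real.exp ((l-1)/σ) := by
      congr 1
      rw [hudef]
      ring
    have hσa1 : (0:ℝ) ≤ σ ^ (a+1) := Real.rpow_nonneg hσ.le _
    have hσa2 : (0:ℝ) ≤ σ ^ (a+2) := Real.rpow_nonneg hσ.le _
    constructor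
    · have kb1 := key_bound (a+1) (by linarith) u hu.le
      calc (1-l) * (q l * t l ^ 2)
          = l ^ b * (((1-l)*(1-l) ^ a) * Real.exp (-(u-1)^2)) := by rw [hq l, hP2]; ring
        _ = l ^ b * (σ ^ (a+1) * (u ^ (a+1) * Real.exp (-(u-1)^2))) := by rw [h1la]; ring
        _ ≤ 1 * (σ ^ (a+1) * (M1 * Real.exp (-u))) := by
            apply mul_le_mul hlb ?_ ?_ zero_le_one
            · exact mul_le_mul_of_nonneg_left kb1 hσa1
            · have := Real.rpow_nonneg hu.le (a+1)
              positivity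
        _ ≤ 1 * (σ ^ (a+1) * (M * Real.exp (-u))) := by
            have : M1 * Real.exp (-u) ≤ M * Real.exp (-u) :=
              mul_le_mul_of_nonneg_right (by rw [hMdef]; linarith) (Real.exp_nonneg _)
            nlinarith [this]
        _ = (M * σ ^ (a+1)) * Real.exp ((l-1)/σ) := by rw [← hEeq]; ring
    · have kb0 := key_bound a ha0 u hu.le
      have kb2 := key_bound (a+2) (by linarith) u hu.le
      have hua2 : u ^ (a+2) = u ^ a * u ^ 2 := by
        rw [Real.rpow_add hu, ← Real.rpow_natCast u 2]
        norm_num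
      have hsa2 : σ ^ (a+2) = σ ^ a * σ ^ 2 := by
        rw [Real.rpow_add hσ, ← Real.rpow_natCast σ 2]
        norm_num
      have hmid : (u ^ a * (1-u)^2) * Real.exp (-(u-1)^2) ≤ (M0 + M2) * Real.exp (-u) := by
        have hstep : (u ^ a * (1-u)^2) * Real.exp (-(u-1)^2) ≤
            (u ^ a + u ^ (a+2)) * Real.exp (-(u-1)^2) := by
          apply mul_le_mul_of_nonneg_right _ (Real.exp_nonneg _)
          have h5 : u ^ a * (1-u)^2 ≤ u ^ a * (1 + u^2) :=
            mul_le_mul_of_nonneg_left (by nlinarith) (Real.rpow_nonneg hu.le a)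
          rw [hua2]
          nlinarith [h5]
        calc (u ^ a * (1-u)^2) * Real.exp (-(u-1)^2)
            ≤ (u ^ a + u ^ (a+2)) * Real.exp (-(u-1)^2) := hstep
          _ = u ^ a * Real.exp (-(u-1)^2) + u ^ (a+2) * Real.exp (-(u-1)^2) := by ring
          _ ≤ M0 * Real.exp (-u) + M2 * Real.exp (-u) := add_le_add kb0 kb2
          _ = (M0 + M2) * Real.exp (-u) := by ring
      calc q l * (l - 1 + σ) ^ 2 * t l ^ 2
          = l ^ b * ((σ ^ a * σ ^ 2) * ((u ^ a * (1-u)^2) * Real.exp (-(u-1)^2))) := by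
            rw [hq l, hP2, hqa, hlc]; ring
        _ ≤ 1 * ((σ ^ a * σ ^ 2) * ((M0 + M2) * Real.exp (-u))) := by
            apply mul_le_mul hlb ?_ ?_ zero_le_one
            · apply mul_le_mul_of_nonneg_left hmid
              have := Real.rpow_nonneg hσ.le a
              positivity
            · have h6 := Real.rpow_nonneg hu.le a
              have h7 := Real.rpow_nonneg hσ.le a
              positivity
        _ ≤ 1 * ((σ ^ a * σ ^ 2) * (M * Real.exp (-u))) := by
            have h8 : (M0 + M2) * Real.exp (-u) ≤ M * Real.exp (-u) :=
              mul_le_mul_of_nonneg_right (by rw [hMdef]; linarith) (Real.exp_nonneg _)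
            have h7 := Real.rpow_nonneg hσ.le a
            nlinarith [h8, sq_nonneg σ]
        _ = (M * σ ^ (a+2)) * Real.exp ((l-1)/σ) := by rw [← hEeq, hsa2]; ring
  -- notation for the three integrals
  set A : ℝ := ∫ l in Ioo (0:ℝ) 1, q l * t l ^ 2 with hAdef
  set B : ℝ := ∫ l in Ioo (0:ℝ) 1, (1-l) * (q l * t l ^ 2) with hBdef
  set Cq : ℝ := ∫ l in Ioo (0:ℝ) 1, q l * (l - 1 + σ) ^ 2 * t l ^ 2 with hCdef
  -- upper bounds on B and Cq
  have hEb := exp_integral_le σ hσ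
  have hB_le : B ≤ M * σ ^ (a+1) * σ := by
    have h1 : B ≤ ∫ l in Ioo (0:ℝ) 1, (M * σ ^ (a+1)) * Real.exp ((l-1)/σ) := by
      apply setIntegral_mono_on hIB (hIE.const_mul _) measurableSet_Ioo
      intro x hx
      exact (hpt x hx).1
    rw [MeasureTheory.integral_const_mul] at h1
    have h2 : (M * σ ^ (a+1)) * (∫ l in Ioo (0:ℝ) 1, Real.exp ((l-1)/σ)) ≤
        (M * σ ^ (a+1)) * σ := by
      apply mul_le_mul_of_nonneg_left hEb
      have := Real.rpow_nonneg hσ.le (a+1)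
      positivity
    exact h1.trans h2
  have hC_le : Cq ≤ M * σ ^ (a+2) * σ := by
    have h1 : Cq ≤ ∫ l in Ioo (0:ℝ) 1, (M * σ ^ (a+2)) * Real.exp ((l-1)/σ) := by
      apply setIntegral_mono_on hIC (hIE.const_mul _) measurableSet_Ioo
      intro x hx
      exact (hpt x hx).2
    rw [MeasureTheory.integral_const_mul] at h1
    have h2 : (M * σ ^ (a+2)) * (∫ l in Ioo (0:ℝ) 1, Real.exp ((l-1)/σ)) ≤
        (M * σ ^ (a+2)) * σ := by
      apply mul_le_mul_of_nonneg_left hEb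
      have := Real.rpow_nonneg hσ.le (a+2)
      positivity
    exact h1.trans h2
  -- nonnegativity of B and Cq
  have hB0 : 0 ≤ B := by
    apply setIntegral_nonneg measurableSet_Ioo
    intro x hx
    exact mul_nonneg (by linarith [hx.2]) (mul_nonneg (hq01 x hx).1 (sq_nonneg _))
  have hC0 : 0 ≤ Cq := by
    apply setIntegral_nonneg measurableSet_Ioo
    intro x hx
    exact mul_nonneg (mul_nonneg (hq01 x hx).1 (sq_nonneg _)) (sq_nonneg _)
  -- lower bound on A
  have hA_ge : c * σ ^ (a+1) ≤ A := by
    have hJsub : Ioo (1-σ) (1-σ/2) ⊆ Ioo (0:ℝ) 1 := by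
      intro x hx
      constructor <;> [linarith [hx.1]; linarith [hx.2]]
    have hptJ : ∀ x ∈ Ioo (1-σ) (1-σ/2),
        (1/2:ℝ) ^ b * Real.exp (-1) * ((σ/2) ^ a) ≤ q x * t x ^ 2 := by
      intro x hx
      obtain ⟨hx1, hx2⟩ := hx
      have hxb : (1/2:ℝ) ^ b ≤ x ^ b :=
        Real.rpow_le_rpow (by norm_num) (by linarith) hb
      have hxa : (σ/2:ℝ) ^ a ≤ (1-x) ^ a :=
        Real.rpow_le_rpow (by linarith) (by linarith) ha0.le
      have hxt : Real.exp (-1) ≤ t x ^ 2 := by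
        rw [ht2g x]
        apply Real.exp_le_exp.2
        have h9 : (x - 1 + σ) ^ 2 / σ ^ 2 ≤ 1 := by
          rw [div_le_one (by positivity)]
          nlinarith
        have h10 : -(x - 1 + σ) ^ 2 / σ ^ 2 = -((x - 1 + σ) ^ 2 / σ ^ 2) := by ring
        rw [h10]
        linarith
      have hp1 : (0:ℝ) ≤ (1/2:ℝ) ^ b := Real.rpow_nonneg (by norm_num) b
      have hp2 : (0:ℝ) ≤ (σ/2:ℝ) ^ a := Real.rpow_nonneg (by positivity) a
      have hp3 : (0:ℝ) ≤ Real.exp (-1) := Real.exp_nonneg _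
      rw [hq x]
      calc (1/2:ℝ) ^ b * Real.exp (-1) * ((σ/2) ^ a)
          = ((1/2:ℝ) ^ b * (σ/2) ^ a) * Real.exp (-1) := by ring
        _ ≤ (x ^ b * (1-x) ^ a) * (t x ^ 2) := by
            apply mul_le_mul (mul_le_mul hxb hxa hp2
              (Real.rpow_nonneg (by linarith) b)) hxt hp3
            have := Real.rpow_nonneg (show (0:ℝ) ≤ x by linarith) b
            have := Real.rpow_nonneg (show (0:ℝ) ≤ 1-x by linarith) a
            positivity
    have hstep1 : ((1/2:ℝ) ^ b * Real.exp (-1) * ((σ/2) ^ a)) * (σ/2) ≤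
        ∫ x in Ioo (1-σ) (1-σ/2), q x * t x ^ 2 := by
      have h := setIntegral_mono_on (integrableOn_const (by
        rw [Real.volume_Ioo]; exact ENNReal.ofReal_ne_top))
        (hIA.mono_set hJsub) measurableSet_Ioo hptJ
      rw [MeasureTheory.setIntegral_const, measureReal_def, Real.volume_Ioo,
        ENNReal.toReal_ofReal (by linarith), smul_eq_mul] at h
      calc ((1/2:ℝ) ^ b * Real.exp (-1) * ((σ/2) ^ a)) * (σ/2)
          = (1 - σ/2 - (1-σ)) * ((1/2:ℝ) ^ b * Real.exp (-1) * ((σ/2) ^ a)) := by ring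
        _ ≤ _ := h
    have hstep2 : (∫ x in Ioo (1-σ) (1-σ/2), q x * t x ^ 2) ≤ A := by
      apply setIntegral_mono_set hIA
      · exact (ae_restrict_iff' measurableSet_Ioo).2 (Filter.Eventually.of_forall
          (fun x hx => mul_nonneg (hq01 x hx).1 (sq_nonneg _)))
      · exact HasSubset.Subset.eventuallyLE hJsub
    have hconv : ((1/2:ℝ) ^ b * Real.exp (-1) * ((σ/2) ^ a)) * (σ/2) = c * σ ^ (a+1) := by
      rw [hcdef]
      have h1 : ((σ/2:ℝ)) ^ a = σ ^ a * (1/2:ℝ) ^ a := by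
        rw [show (σ/2:ℝ) = σ * (1/2) by ring, Real.mul_rpow hσ.le (by norm_num)]
      have h2 : σ ^ (a+1) = σ ^ a * σ := Real.rpow_add_one hσ.ne' a
      have h3 : (1/2:ℝ) ^ (a+1) = (1/2:ℝ) ^ a * (1/2) := Real.rpow_add_one (by norm_num) a
      rw [h1, h2, h3]
      ring
    linarith
  have hApos : 0 < A := by
    have h := Real.rpow_pos_of_pos hσ (a+1)
    nlinarith [hA_ge]
  -- rewrite the numerator
  have hsplit : (∫ l in Ioo (0:ℝ) 1, l * q l * t l ^ 2) = A - B := by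
    have heq : ∀ l : ℝ, l * q l * t l ^ 2 = q l * t l ^ 2 - (1-l) * (q l * t l ^ 2) := by
      intro l; ring
    rw [hAdef, hBdef]
    simp only [heq]
    exact MeasureTheory.integral_sub hIA hIB
  have hderivt : ∀ x : ℝ, q x * (deriv t x) ^ 2 =
      (q x * (x - 1 + σ) ^ 2 * t x ^ 2) * ((σ^2)^2)⁻¹ := by
    intro x
    have h1 : HasDerivAt (fun l : ℝ => l - 1 + σ) 1 x :=
      ((hasDerivAt_id x).sub_const 1).add_const σ
    have h2 := ((h1.pow 2).neg.div_const (2*σ^2)).exp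
    have h3 : HasDerivAt t (Real.exp (-(x - 1 + σ)^2 / (2*σ^2)) *
        (-(↑2 * (x - 1 + σ) ^ (2-1) * 1) / (2*σ^2))) x := htfun ▸ h2
    rw [h3.deriv, ht x]
    have hσ2 : σ^2 ≠ 0 := by positivity
    field_simp
    ring
  have hDint : D * (∫ l in Ioo (0:ℝ) 1, q l * (deriv t l) ^ 2) = Cq / σ := by
    simp only [hderivt]
    rw [MeasureTheory.integral_mul_const, hCdef, ← hs3]
    field_simp
  -- assemble
  refine ⟨hApos, ?_⟩
  rw [hsplit, hDint]
  have hsa2' : σ ^ (a+2) = σ * σ ^ (a+1) := by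
    rw [show (a+2:ℝ) = (a+1)+1 by ring, Real.rpow_add_one hσ.ne']
    ring
  have hN_le : B + Cq/σ ≤ 2*M*σ^(a+2) := by
    have h1 : B ≤ M * σ^(a+2) := by rw [hsa2']; nlinarith [hB_le]
    have h2 : Cq/σ ≤ M * σ^(a+2) := by
      rw [div_le_iff₀ hσ]
      nlinarith [hC_le]
    calc B + Cq/σ ≤ M*σ^(a+2) + M*σ^(a+2) := add_le_add h1 h2
      _ = 2*M*σ^(a+2) := by ring
  have hNA : (B + Cq/σ)/A ≤ (2*M/c)*σ := by
    rw [div_le_iff₀ hApos]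
    have h2 : 2*M*σ^(a+2) = ((2*M/c)*σ) * (c*σ^(a+1)) := by
      rw [hsa2']
      field_simp
    have h3 : ((2*M/c)*σ) * (c*σ^(a+1)) ≤ ((2*M/c)*σ) * A := by
      apply mul_le_mul_of_nonneg_left hA_ge
      positivity
    linarith
  have hfrac : (A - B - Cq/σ)/A = 1 - (B + Cq/σ)/A := by
    field_simp
    ring
  rw [hfrac]
  linarith
end

section
/- Let a > 1 and b ≥ 0 be real numbers, q(λ) = λ^b (1−λ)^a, and for D > 0 let μ(D) = sSup { (∫₀¹ λ q t² dλ − D ∫₀¹ q (t')² dλ)/(∫₀¹ q t² dλ) : t : [0,1] → ℝ continuously differentiable with ∫₀¹ q t² dλ > 0 }. Then there exist κ > 0 and D₀ ∈ (0,1] such that for all D ∈ (0, D₀): 1 − κ D^{1/3} ≤ μ(D) ≤ 1. In particular, 1 − μ(D) = O(D^{1/3}) and lim_{D→0⁺} μ(D) = 1. -/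
open MeasureTheory Set Filter


lemma contRpow {u : ℝ} (hu : 0 ≤ u) : Continuous fun x : ℝ => x ^ u :=
  continuous_iff_continuousAt.2 fun x => Real.continuousAt_rpow_const x u (Or.inr hu)

lemma contG {u v : ℝ} (hu : 0 ≤ u) (hv : 0 ≤ v) :
    Continuous fun x : ℝ => x ^ u * (1 - x) ^ v :=
  (contRpow hu).mul ((contRpow hv).comp (continuous_const.sub continuous_id))

lemma intG {u v : ℝ} (hu : 0 ≤ u) (hv : 0 ≤ v) :
    IntegrableOn (fun x : ℝ => x ^ u * (1 - x) ^ v) (Ioo 0 1) :=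
  ((contG hu hv).integrableOn_Icc (a := 0) (b := 1)).mono_set Ioo_subset_Icc_self

lemma ioo_eq (f : ℝ → ℝ) : ∫ x in Ioo (0:ℝ) 1, f x = ∫ x in (0:ℝ)..1, f x := by
  rw [intervalIntegral.integral_of_le zero_le_one, MeasureTheory.integral_Ioc_eq_integral_Ioo]

lemma Jpos {u v : ℝ} (hu : 0 ≤ u) (hv : 0 ≤ v) :
    0 < ∫ x in Ioo (0:ℝ) 1, x ^ u * (1 - x) ^ v := by
  rw [ioo_eq]
  refine intervalIntegral.intervalIntegral_pos_of_pos_on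
    ((contG hu hv).intervalIntegrable 0 1) (fun x hx => ?_) one_pos
  exact mul_pos (Real.rpow_pos_of_pos hx.1 u) (Real.rpow_pos_of_pos (by linarith [hx.2]) v)

lemma ibp {u v : ℝ} (hu : 0 ≤ u) (hv : 0 ≤ v) :
    (u+1) * ∫ x in Ioo (0:ℝ) 1, x ^ u * (1-x) ^ (v+1)
      = (v+1) * ∫ x in Ioo (0:ℝ) 1, x ^ (u+1) * (1-x) ^ v := by
  have hF : ∀ x ∈ uIcc (0:ℝ) 1, HasDerivAt (fun y : ℝ => y ^ (u+1) * (1-y) ^ (v+1))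
      ((u+1) * (x ^ u * (1-x)^(v+1)) - (v+1) * (x ^ (u+1) * (1-x) ^ v)) x := by
    intro x _
    have h1 : HasDerivAt (fun y : ℝ => y ^ (u+1)) ((u+1) * x ^ u) x := by
      have := Real.hasDerivAt_rpow_const (x := x) (p := u+1) (Or.inr (by linarith))
      simpa [add_sub_cancel_right] using this
    have h0 : HasDerivAt (fun y : ℝ => 1 - y) (-1) x := by
      simpa using (hasDerivAt_id x).const_sub (1:ℝ)
    have h2 : HasDerivAt (fun y : ℝ => (1-y) ^ (v+1)) (-((v+1) * (1-x) ^ v)) x := by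
      have := (Real.hasDerivAt_rpow_const (x := 1-x) (p := v+1) (Or.inr (by linarith))).comp x h0
      simpa [Function.comp_def, add_sub_cancel_right] using this
    have : HasDerivAt (fun y : ℝ => y ^ (u+1) * (1-y) ^ (v+1)) _ x := h1.mul h2
    convert this using 1
    ring
  have hcont : Continuous fun x : ℝ =>
      (u+1) * (x ^ u * (1-x)^(v+1)) - (v+1) * (x ^ (u+1) * (1-x) ^ v) :=
    (continuous_const.mul (contG hu (by linarith))).sub
      (continuous_const.mul (contG (by linarith) hv))
  have key := intervalIntegral.integral_eq_sub_of_hasDerivAt hF (hcont.intervalIntegrable 0 1)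
  have h10 : (1:ℝ) ^ (u+1) * (1-1:ℝ) ^ (v+1) = 0 := by
    rw [show (1-1:ℝ) = 0 by ring, Real.zero_rpow (by linarith)]; ring
  have h00 : (0:ℝ) ^ (u+1) * (1-0:ℝ) ^ (v+1) = 0 := by
    rw [Real.zero_rpow (by linarith)]; ring
  rw [h10, h00, sub_zero] at key
  rw [intervalIntegral.integral_sub (f := fun x : ℝ => (u+1) * (x ^ u * (1-x)^(v+1)))
      (g := fun x : ℝ => (v+1) * (x ^ (u+1) * (1-x) ^ v))
      ((continuous_const.mul (contG hu (by linarith))).intervalIntegrable 0 1)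
      ((continuous_const.mul (contG (by linarith) hv)).intervalIntegrable 0 1),
    intervalIntegral.integral_const_mul, intervalIntegral.integral_const_mul] at key
  rw [ioo_eq, ioo_eq]
  linarith

lemma splitJ {s v : ℝ} (hs : 0 ≤ s) (hv : 0 ≤ v) :
    ∫ x in Ioo (0:ℝ) 1, x ^ s * (1-x) ^ (v+1)
      = (∫ x in Ioo (0:ℝ) 1, x ^ s * (1-x) ^ v) - ∫ x in Ioo (0:ℝ) 1, x ^ (s+1) * (1-x) ^ v := by
  have hcong : ∀ x ∈ Ioo (0:ℝ) 1,
      x ^ s * (1-x) ^ (v+1) = x ^ s * (1-x) ^ v - x ^ (s+1) * (1-x) ^ v := by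
    intro x hx
    rw [Real.rpow_add_one (by linarith [hx.2] : (1:ℝ) - x ≠ 0),
        Real.rpow_add_one (ne_of_gt hx.1)]
    ring
  rw [MeasureTheory.setIntegral_congr_fun measurableSet_Ioo hcong,
    MeasureTheory.integral_sub (intG hs hv) (intG (by linarith) hv)]

lemma rec1 {s v : ℝ} (hs : 1 ≤ s) (hv : 0 ≤ v) :
    ∫ x in Ioo (0:ℝ) 1, x ^ (s-1) * (1-x) ^ v
      = ((s+v+1)/s) * ∫ x in Ioo (0:ℝ) 1, x ^ s * (1-x) ^ v := by
  have h1 := ibp (u := s-1) (v := v) (by linarith) hv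
  rw [show s - 1 + 1 = s by ring] at h1
  rw [splitJ (by linarith) hv, show s - 1 + 1 = s by ring] at h1
  have hJ := Jpos (u := s) (by linarith) hv
  have hs0 : (0:ℝ) < s := by linarith
  field_simp
  nlinarith [h1]

lemma Mbound {p v : ℝ} (hp : 0 ≤ p) (hv : 0 ≤ v) :
    ∫ x in Ioo (0:ℝ) 1, x ^ p * (1-x) ^ (v+1)
      ≤ ((v+1)/(p+1)) * ∫ x in Ioo (0:ℝ) 1, x ^ p * (1-x) ^ v := by
  have h1 := ibp (u := p) (v := v) hp hv
  have hmono : ∫ x in Ioo (0:ℝ) 1, x ^ (p+1) * (1-x) ^ v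
      ≤ ∫ x in Ioo (0:ℝ) 1, x ^ p * (1-x) ^ v := by
    refine MeasureTheory.setIntegral_mono_on (intG (by linarith) hv) (intG hp hv)
      measurableSet_Ioo (fun x hx => ?_)
    have hxp : x ^ (p+1) ≤ x ^ p :=
      Real.rpow_le_rpow_of_exponent_ge hx.1 hx.2.le (by linarith)
    have : (0:ℝ) ≤ (1-x) ^ v := Real.rpow_nonneg (by linarith [hx.2]) v
    nlinarith
  have hp1 : (0:ℝ) < p + 1 := by linarith
  rw [div_mul_eq_mul_div, le_div_iff₀ hp1, mul_comm _ (p+1)]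
  nlinarith [h1]

lemma J2bound {p v : ℝ} (hv : 0 ≤ v) (hpv : v + 2 ≤ p) (hp2 : 2 ≤ p) :
    ∫ x in Ioo (0:ℝ) 1, x ^ (p-2) * (1-x) ^ v ≤ 4 * ∫ x in Ioo (0:ℝ) 1, x ^ p * (1-x) ^ v := by
  have h1 := rec1 (s := p-1) (v := v) (by linarith) hv
  have h2 := rec1 (s := p) (v := v) (by linarith) hv
  rw [show p - 1 - 1 = p - 2 by ring] at h1
  rw [h2] at h1
  have hJ := Jpos (u := p) (by linarith) hv
  rw [h1]
  have c1 : (p-1+v+1)/(p-1) ≤ 2 := by rw [div_le_iff₀ (by linarith)]; linarith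
  have c2 : (p+v+1)/p ≤ 2 := by rw [div_le_iff₀ (by linarith)]; linarith
  have n1 : 0 ≤ (p-1+v+1)/(p-1) := div_nonneg (by linarith) (by linarith)
  have n2 : 0 ≤ (p+v+1)/p := div_nonneg (by linarith) (by linarith)
  have h4 : (p-1+v+1)/(p-1) * ((p+v+1)/p) ≤ 4 := by nlinarith
  calc (p-1+v+1)/(p-1) * ((p+v+1)/p * ∫ (x : ℝ) in Ioo 0 1, x ^ p * (1 - x) ^ v)
      = ((p-1+v+1)/(p-1) * ((p+v+1)/p)) * ∫ (x : ℝ) in Ioo 0 1, x ^ p * (1 - x) ^ v := by ring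
    _ ≤ 4 * ∫ (x : ℝ) in Ioo 0 1, x ^ p * (1 - x) ^ v := mul_le_mul_of_nonneg_right h4 hJ.le

lemma member_bound (a b : ℝ) (ha : 1 < a) (hb : 0 ≤ b) (D : ℝ) (hD : 0 < D)
    (m : ℕ) (hm : (a+2)/2 ≤ (m:ℝ)) :
    0 < (∫ l in Ioo (0:ℝ) 1, (l^b*(1-l)^a) * ((l^m : ℝ)) ^ 2) ∧
    1 - (a+1)/(2*m) - 4*D*(m:ℝ)^2 ≤
      ((∫ l in Ioo (0:ℝ) 1, l * (l^b*(1-l)^a) * ((l^m:ℝ)) ^ 2)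
        - D * ∫ l in Ioo (0:ℝ) 1, (l^b*(1-l)^a) * (deriv (fun x:ℝ => x^m) l) ^ 2)
        / (∫ l in Ioo (0:ℝ) 1, (l^b*(1-l)^a) * ((l^m:ℝ)) ^ 2) := by
  have hm1 : 1 ≤ m := by
    by_contra h
    push_neg at h
    interval_cases m <;> simp_all <;> linarith
  set p : ℝ := b + 2*(m:ℝ) with hp
  have hmR : (1:ℝ) ≤ (m:ℝ) := by exact_mod_cast hm1
  have hp0 : 0 ≤ p := by simp only [hp]; linarith
  have hp2 : 2 ≤ p := by simp only [hp]; linarith [hm]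
  have hpa : a + 2 ≤ p := by simp only [hp]; linarith [hm]
  have ha0 : (0:ℝ) ≤ a := by linarith
  -- pointwise identities
  have e1 : ∀ l ∈ Ioo (0:ℝ) 1, (l^b*(1-l)^a) * ((l^m : ℝ)) ^ 2 = l ^ p * (1-l) ^ a := by
    intro l hl
    have hkey : l ^ b * l ^ ((m*2 : ℕ) : ℝ) = l ^ p := by
      rw [← Real.rpow_add hl.1]; congr 1; push_cast; ring
    calc (l^b*(1-l)^a) * ((l^m : ℝ)) ^ 2
        = (l^b * l^((m*2:ℕ):ℝ)) * (1-l)^a := by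
          rw [Real.rpow_natCast l (m*2), ← pow_mul]; ring
      _ = l ^ p * (1-l) ^ a := by rw [hkey]
  have den_eq : (∫ l in Ioo (0:ℝ) 1, (l^b*(1-l)^a) * ((l^m : ℝ)) ^ 2)
      = ∫ x in Ioo (0:ℝ) 1, x ^ p * (1-x) ^ a :=
    MeasureTheory.setIntegral_congr_fun measurableSet_Ioo e1
  have e2 : ∀ l ∈ Ioo (0:ℝ) 1, l * (l^b*(1-l)^a) * ((l^m:ℝ)) ^ 2
      = l ^ p * (1-l) ^ a - l ^ p * (1-l) ^ (a+1) := by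
    intro l hl
    have h1l : (1:ℝ) - l ≠ 0 := by have := hl.2; intro h; linarith [hl.2]
    calc l * (l^b*(1-l)^a) * ((l^m:ℝ)) ^ 2
        = l * ((l^b*(1-l)^a) * ((l^m:ℝ)) ^ 2) := by ring
      _ = l * (l ^ p * (1-l) ^ a) := by rw [e1 l hl]
      _ = l ^ p * (1-l) ^ a - l ^ p * (1-l) ^ (a+1) := by
          rw [Real.rpow_add_one h1l]; ring
  have num1_eq : (∫ l in Ioo (0:ℝ) 1, l * (l^b*(1-l)^a) * ((l^m:ℝ)) ^ 2)
      = (∫ x in Ioo (0:ℝ) 1, x ^ p * (1-x) ^ a)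
        - ∫ x in Ioo (0:ℝ) 1, x ^ p * (1-x) ^ (a+1) := by
    rw [MeasureTheory.setIntegral_congr_fun measurableSet_Ioo e2,
      MeasureTheory.integral_sub (intG hp0 ha0) (intG hp0 (by linarith))]
  have e3 : ∀ l ∈ Ioo (0:ℝ) 1, (l^b*(1-l)^a) * (deriv (fun x:ℝ => x^m) l) ^ 2
      = (m:ℝ)^2 * (l ^ (p-2) * (1-l) ^ a) := by
    intro l hl
    have hkey : l ^ b * l ^ (((m-1)*2 : ℕ) : ℝ) = l ^ (p-2) := by
      rw [← Real.rpow_add hl.1]; congr 1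
      push_cast [Nat.cast_sub hm1]; ring
    rw [deriv_pow_field]
    calc (l^b*(1-l)^a) * ((m:ℝ) * l ^ (m-1)) ^ 2
        = (m:ℝ)^2 * ((l^b * l^(((m-1)*2:ℕ):ℝ)) * (1-l)^a) := by
          rw [Real.rpow_natCast l ((m-1)*2), pow_mul]; ring
      _ = (m:ℝ)^2 * (l ^ (p-2) * (1-l) ^ a) := by rw [hkey]
  have K_eq : (∫ l in Ioo (0:ℝ) 1, (l^b*(1-l)^a) * (deriv (fun x:ℝ => x^m) l) ^ 2)
      = (m:ℝ)^2 * ∫ x in Ioo (0:ℝ) 1, x ^ (p-2) * (1-x) ^ a := by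
    rw [MeasureTheory.setIntegral_congr_fun measurableSet_Ioo e3,
      MeasureTheory.integral_const_mul]
  -- bounds
  set Jp := ∫ x in Ioo (0:ℝ) 1, x ^ p * (1-x) ^ a with hJpdef
  set Mint := ∫ x in Ioo (0:ℝ) 1, x ^ p * (1-x) ^ (a+1) with hMdef
  set Jm2 := ∫ x in Ioo (0:ℝ) 1, x ^ (p-2) * (1-x) ^ a with hJm2def
  have hJp : 0 < Jp := Jpos hp0 ha0
  have hMb : Mint ≤ ((a+1)/(p+1)) * Jp := Mbound hp0 ha0
  have hKb : Jm2 ≤ 4 * Jp := J2bound ha0 hpa hp2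
  have hden : 0 < (∫ l in Ioo (0:ℝ) 1, (l^b*(1-l)^a) * ((l^m : ℝ)) ^ 2) := by
    rw [den_eq]; exact hJp
  refine ⟨hden, ?_⟩
  rw [den_eq, num1_eq, K_eq]
  rw [le_div_iff₀ hJp]
  have hc : (a+1)/(p+1) ≤ (a+1)/(2*(m:ℝ)) := by
    apply div_le_div_of_nonneg_left (by linarith) (by linarith) (by simp only [hp]; linarith)
  have hMc : Mint ≤ ((a+1)/(2*(m:ℝ))) * Jp :=
    le_trans hMb (mul_le_mul_of_nonneg_right hc hJp.le)
  have hKc : D * ((m:ℝ)^2 * Jm2) ≤ 4*D*(m:ℝ)^2 * Jp := by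
    nlinarith [mul_le_mul_of_nonneg_left hKb (by positivity : (0:ℝ) ≤ D*(m:ℝ)^2)]
  nlinarith [hMc, hKc]

lemma upper_aux (a b : ℝ) (ha : 1 < a) (hb : 0 ≤ b) (D : ℝ) (hD : 0 ≤ D)
    (t : ℝ → ℝ) (htC : ContDiffOn ℝ 1 t (Icc 0 1))
    (hpos : 0 < ∫ l in Ioo (0:ℝ) 1, (l^b*(1-l)^a) * (t l)^2) :
    ((∫ l in Ioo (0:ℝ) 1, l * (l^b*(1-l)^a) * (t l)^2)
      - D * ∫ l in Ioo (0:ℝ) 1, (l^b*(1-l)^a) * (deriv t l)^2)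
      / (∫ l in Ioo (0:ℝ) 1, (l^b*(1-l)^a) * (t l)^2) ≤ 1 := by
  have ha0 : (0:ℝ) ≤ a := by linarith
  have hQ : Continuous fun l : ℝ => l^b*(1-l)^a := contG hb ha0
  have htc : ContinuousOn t (Icc 0 1) := htC.continuousOn
  have hInt1 : IntegrableOn (fun l => (l^b*(1-l)^a) * (t l)^2) (Ioo 0 1) :=
    (((hQ.continuousOn.mul (htc.pow 2)).integrableOn_compact
      isCompact_Icc)).mono_set Ioo_subset_Icc_self
  have hInt2 : IntegrableOn (fun l => l * (l^b*(1-l)^a) * (t l)^2) (Ioo 0 1) :=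
    ((((continuous_id.continuousOn.mul hQ.continuousOn).mul
      (htc.pow 2)).integrableOn_compact isCompact_Icc)).mono_set Ioo_subset_Icc_self
  have hQnn : ∀ x ∈ Ioo (0:ℝ) 1, 0 ≤ x^b*(1-x)^a := fun x hx =>
    mul_nonneg (Real.rpow_nonneg hx.1.le b) (Real.rpow_nonneg (by linarith [hx.2]) a)
  have hmono : (∫ l in Ioo (0:ℝ) 1, l * (l^b*(1-l)^a) * (t l)^2)
      ≤ ∫ l in Ioo (0:ℝ) 1, (l^b*(1-l)^a) * (t l)^2 := by
    refine MeasureTheory.setIntegral_mono_on hInt2 hInt1 measurableSet_Ioo (fun x hx => ?_)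
    nlinarith [mul_nonneg (by linarith [hx.2] : (0:ℝ) ≤ 1 - x)
      (mul_nonneg (hQnn x hx) (sq_nonneg (t x)))]
  have hder : 0 ≤ ∫ l in Ioo (0:ℝ) 1, (l^b*(1-l)^a)*(deriv t l)^2 :=
    MeasureTheory.setIntegral_nonneg measurableSet_Ioo
      (fun x hx => mul_nonneg (hQnn x hx) (sq_nonneg _))
  rw [div_le_one hpos]
  nlinarith [mul_nonneg hD hder]


set_option maxHeartbeats 2000000 in
/-- Theorem 1(iii): the variationally defined mean growth rate satisfies
`1 − μ(D) = O(D^{1/3})`, and in particular `μ(D) → 1` as `D → 0⁺`. -/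
theorem mean_growth_rate_asymptotics
    (a b : ℝ) (ha : 1 < a) (hb : 0 ≤ b)
    (q : ℝ → ℝ) (hq : ∀ l, q l = l ^ b * (1 - l) ^ a)
    (μ : ℝ → ℝ)
    (hμ : ∀ D : ℝ, μ D = sSup { r : ℝ | ∃ t : ℝ → ℝ,
        ContDiffOn ℝ 1 t (Icc 0 1) ∧
        0 < (∫ l in Ioo (0:ℝ) 1, q l * (t l) ^ 2) ∧
        r = ((∫ l in Ioo (0:ℝ) 1, l * q l * (t l) ^ 2)
              - D * ∫ l in Ioo (0:ℝ) 1, q l * (deriv t l) ^ 2)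
            / (∫ l in Ioo (0:ℝ) 1, q l * (t l) ^ 2) }) :
    (∃ κ : ℝ, 0 < κ ∧ ∃ D₀ ∈ Ioc (0:ℝ) 1, ∀ D ∈ Ioo (0:ℝ) D₀,
        1 - κ * D ^ ((1:ℝ)/3) ≤ μ D ∧ μ D ≤ 1) ∧
    Tendsto μ (nhdsWithin 0 (Ioi 0)) (nhds 1) := by
  have hqf : q = fun l => l ^ b * (1-l) ^ a := funext hq
  subst hqf
  have ha0 : (0:ℝ) ≤ a := by linarith
  set κ := (a+1)/2 + 16 with hκ
  have hκpos : 0 < κ := by rw [hκ]; linarith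
  set D₀ := (2/(a+4))^(3:ℕ) with hD₀def
  have hD₀pos : 0 < D₀ := by rw [hD₀def]; positivity
  have hD₀le1 : D₀ ≤ 1 := by
    have h1 : 2/(a+4) ≤ 1 := by rw [div_le_one (by linarith)]; linarith
    calc D₀ = (2/(a+4))^(3:ℕ) := hD₀def
      _ ≤ 1^(3:ℕ) := pow_le_pow_left₀ (by positivity) h1 3
      _ = 1 := one_pow 3
  have key : ∀ D ∈ Ioo (0:ℝ) D₀, 1 - κ * D ^ ((1:ℝ)/3) ≤ μ D ∧ μ D ≤ 1 := by
    intro D hD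
    obtain ⟨hD0, hDD₀⟩ := hD
    have hub : ∀ r ∈ { r : ℝ | ∃ t : ℝ → ℝ,
        ContDiffOn ℝ 1 t (Icc 0 1) ∧
        0 < (∫ l in Ioo (0:ℝ) 1, (l ^ b * (1-l) ^ a) * (t l) ^ 2) ∧
        r = ((∫ l in Ioo (0:ℝ) 1, l * (l ^ b * (1-l) ^ a) * (t l) ^ 2)
              - D * ∫ l in Ioo (0:ℝ) 1, (l ^ b * (1-l) ^ a) * (deriv t l) ^ 2)
            / (∫ l in Ioo (0:ℝ) 1, (l ^ b * (1-l) ^ a) * (t l) ^ 2) }, r ≤ 1 := by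
      rintro r ⟨t, htC, hpos, rfl⟩
      exact upper_aux a b ha hb D hD0.le t htC hpos
    have hle1 : μ D ≤ 1 := by rw [hμ]; exact Real.sSup_le hub zero_le_one
    set s := D ^ ((1:ℝ)/3) with hs
    have hspos : 0 < s := Real.rpow_pos_of_pos hD0 _
    have hs3 : s ^ (3:ℕ) = D := by
      rw [hs, ← Real.rpow_natCast (D ^ ((1:ℝ)/3)) 3, ← Real.rpow_mul hD0.le]
      norm_num
    have hslt : s < 2/(a+4) := by
      have h1 : s < D₀ ^ ((1:ℝ)/3) := Real.rpow_lt_rpow hD0.le hDD₀ (by norm_num)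
      have h2 : D₀ ^ ((1:ℝ)/3) = 2/(a+4) := by
        rw [hD₀def, ← Real.rpow_natCast (2/(a+4)) 3, ← Real.rpow_mul (by positivity)]
        norm_num
      rw [h2] at h1; exact h1
    have hsinv : (a+4)/2 < s⁻¹ := by
      have := inv_strictAnti₀ hspos hslt
      rwa [inv_div] at this
    have hsinv0 : (0:ℝ) ≤ s⁻¹ := inv_nonneg.mpr hspos.le
    set m := ⌈(a+2)/2 + s⁻¹⌉₊ with hmdef
    have hmge : (a+2)/2 + s⁻¹ ≤ (m:ℝ) := Nat.le_ceil _
    have hmle : (m:ℝ) < (a+2)/2 + s⁻¹ + 1 := Nat.ceil_lt_add_one (by positivity)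
    have hm1 : (a+2)/2 ≤ (m:ℝ) := by linarith
    obtain ⟨hden, hval⟩ := member_bound a b ha hb D hD0 m hm1
    have hbdd : BddAbove { r : ℝ | ∃ t : ℝ → ℝ,
        ContDiffOn ℝ 1 t (Icc 0 1) ∧
        0 < (∫ l in Ioo (0:ℝ) 1, (l ^ b * (1-l) ^ a) * (t l) ^ 2) ∧
        r = ((∫ l in Ioo (0:ℝ) 1, l * (l ^ b * (1-l) ^ a) * (t l) ^ 2)
              - D * ∫ l in Ioo (0:ℝ) 1, (l ^ b * (1-l) ^ a) * (deriv t l) ^ 2)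
            / (∫ l in Ioo (0:ℝ) 1, (l ^ b * (1-l) ^ a) * (t l) ^ 2) } := ⟨1, hub⟩
    have hlow : ((∫ l in Ioo (0:ℝ) 1, l * (l^b*(1-l)^a) * ((l^m:ℝ)) ^ 2)
        - D * ∫ l in Ioo (0:ℝ) 1, (l^b*(1-l)^a) * (deriv (fun x:ℝ => x^m) l) ^ 2)
        / (∫ l in Ioo (0:ℝ) 1, (l^b*(1-l)^a) * ((l^m:ℝ)) ^ 2) ≤ μ D := by
      rw [hμ]
      exact le_csSup hbdd ⟨fun x => x^m, (contDiff_id.pow m).contDiffOn, hden, rfl⟩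
    have hmpos : (0:ℝ) < (m:ℝ) := by linarith
    have hminv : (a+1)/(2*(m:ℝ)) ≤ ((a+1)/2) * s := by
      have h1 : s⁻¹ ≤ (m:ℝ) := by linarith
      rw [div_le_iff₀ (by positivity)]
      have h2 : 1 ≤ s * (m:ℝ) := by
        calc (1:ℝ) = s * s⁻¹ := (mul_inv_cancel₀ hspos.ne').symm
          _ ≤ s * m := mul_le_mul_of_nonneg_left h1 hspos.le
      nlinarith [h2]
    have hDm : 4*D*(m:ℝ)^2 ≤ 16 * s := by
      have hmub : (m:ℝ) ≤ 2 * s⁻¹ := by linarith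
      have h2 : (m:ℝ)^2 ≤ 4 * s⁻¹^2 := by nlinarith [hmpos.le]
      have h3 : D * s⁻¹^2 = s := by
        rw [← hs3]; field_simp
      nlinarith [hD0.le, h2, h3, hspos]
    have hκs : 1 - κ * s = 1 - ((a+1)/2)*s - 16*s := by rw [hκ]; ring
    have hnum : 1 - κ * s ≤ 1 - (a+1)/(2*(m:ℝ)) - 4*D*(m:ℝ)^2 := by
      rw [hκs]; linarith
    exact ⟨le_trans (le_trans hnum hval) hlow, hle1⟩
  refine ⟨⟨κ, hκpos, D₀, ⟨hD₀pos, hD₀le1⟩, key⟩, ?_⟩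
  have h1 : Tendsto (fun D : ℝ => 1 - κ * D ^ ((1:ℝ)/3)) (nhdsWithin 0 (Ioi 0)) (nhds 1) := by
    have h0 : Tendsto (fun D : ℝ => D ^ ((1:ℝ)/3)) (nhds 0) (nhds 0) := by
      have := (Real.continuousAt_rpow_const 0 ((1:ℝ)/3) (Or.inr (by norm_num))).tendsto
      simpa [Real.zero_rpow (by norm_num : ((1:ℝ)/3) ≠ 0)] using this
    have h2 := (tendsto_const_nhds (x := (1:ℝ)) (f := nhdsWithin (0:ℝ) (Ioi 0))).sub
      ((tendsto_const_nhds (x := κ) (f := nhdsWithin (0:ℝ) (Ioi 0))).mul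
        (h0.mono_left nhdsWithin_le_nhds))
    simpa using h2
  have hev : ∀ᶠ D in nhdsWithin (0:ℝ) (Ioi 0), D ∈ Ioo (0:ℝ) D₀ :=
    Ioo_mem_nhdsGT_of_mem ⟨le_refl 0, hD₀pos⟩
  exact tendsto_of_tendsto_of_tendsto_of_le_of_le' h1 tendsto_const_nhds
    (hev.mono fun D hD => (key D hD).1) (hev.mono fun D hD => (key D hD).2)
end

section
/- Let a > 1, A, and λₖ be real numbers. Let Y_a, Y_k : (0,∞) → ℝ be twice continuously differentiable and satisfy, for all w > 0, −Y_a''(w) + (w + a(a−2)/(4w²))·Y_a(w) = A·Y_a(w) and −Y_k''(w) + (w + a(a−2)/(4w²))·Y_k(w) = λₖ·Y_k(w). Assume w ↦ w^{1+a/2} Y_a(w) and w ↦ w^{1+a/2} Y_k(w) are integrable on (0,∞) with ∫₀^∞ w^{1+a/2} Y_a(w) dw = A and ∫₀^∞ w^{1+a/2} Y_k(w) dw = λₖ − 2A. Define δ = Y_a + Y_k. Then for every w > 0: −δ''(w) + (w − A + a(a−2)/(4w²))·δ(w) + Y_a(w)·(∫₀^∞ v^{1+a/2} δ(v) dv) =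 (λₖ − A)·δ(w). -/
open MeasureTheory Set Filter

/-- Relaxation-time analysis: `δ = Y_a + Y_k` is an eigenvector, with eigenvalue
`λₖ − A`, of the integro-differential operator linearizing the Fokker–Planck
dynamics around the steady state. -/
theorem perturbation_eigenvector
    (a A lamk : ℝ) (ha : 1 < a)
    (Ya Yk : ℝ → ℝ)
    (hYa : ContDiffOn ℝ 2 Ya (Ioi 0))
    (hYk : ContDiffOn ℝ 2 Yk (Ioi 0))
    (heqa : ∀ w : ℝ, 0 < w →
      -(deriv (deriv Ya) w) + (w + a * (a - 2) / (4 * w ^ 2)) * Ya w = A * Ya w)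
    (heqk : ∀ w : ℝ, 0 < w →
      -(deriv (deriv Yk) w) + (w + a * (a - 2) / (4 * w ^ 2)) * Yk w
        = lamk * Yk w)
    (hInta : IntegrableOn (fun w => w ^ (1 + a / 2) * Ya w) (Ioi 0))
    (hIntk : IntegrableOn (fun w => w ^ (1 + a / 2) * Yk w) (Ioi 0))
    (hma : ∫ w in Ioi (0:ℝ), w ^ (1 + a / 2) * Ya w = A)
    (hmk : ∫ w in Ioi (0:ℝ), w ^ (1 + a / 2) * Yk w = lamk - 2 * A)
    (δ : ℝ → ℝ) (hδ : ∀ w, δ w = Ya w + Yk w) :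
    ∀ w : ℝ, 0 < w →
      -(deriv (deriv δ) w) + (w - A + a * (a - 2) / (4 * w ^ 2)) * δ w
          + Ya w * (∫ v in Ioi (0:ℝ), v ^ (1 + a / 2) * δ v)
        = (lamk - A) * δ w := by
  have hδfun : δ = fun w => Ya w + Yk w := funext hδ
  -- the integral of δ
  have hint : (∫ v in Ioi (0:ℝ), v ^ (1 + a / 2) * δ v) = lamk - A := by
    have : (∫ v in Ioi (0:ℝ), v ^ (1 + a / 2) * δ v)
        = ∫ v in Ioi (0:ℝ), (v ^ (1 + a / 2) * Ya v + v ^ (1 + a / 2) * Yk v) := by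
      congr 1
      ext v
      rw [hδ v, mul_add]
    rw [this, integral_add hInta hIntk, hma, hmk]
    ring
  -- first derivatives
  have hdYa : ContDiffOn ℝ 1 (deriv Ya) (Ioi 0) := by
    have := ContDiffOn.deriv_of_isOpen (m := 1) hYa isOpen_Ioi (by norm_num)
    simpa using this
  have hdYk : ContDiffOn ℝ 1 (deriv Yk) (Ioi 0) := by
    have := ContDiffOn.deriv_of_isOpen (m := 1) hYk isOpen_Ioi (by norm_num)
    simpa using this
  intro w hw
  have hmem : Ioi (0:ℝ) ∈ nhds w := isOpen_Ioi.mem_nhds hw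
  have hDa : ∀ x ∈ Ioi (0:ℝ), DifferentiableAt ℝ Ya x := fun x hx =>
    ((hYa.differentiableOn (by norm_num)).differentiableAt (isOpen_Ioi.mem_nhds hx))
  have hDk : ∀ x ∈ Ioi (0:ℝ), DifferentiableAt ℝ Yk x := fun x hx =>
    ((hYk.differentiableOn (by norm_num)).differentiableAt (isOpen_Ioi.mem_nhds hx))
  have hE : deriv δ =ᶠ[nhds w] fun x => deriv Ya x + deriv Yk x := by
    filter_upwards [hmem] with x hx
    rw [hδfun, deriv_fun_add (hDa x hx) (hDk x hx)]
  have hdd : deriv (deriv δ) w = deriv (deriv Ya) w + deriv (deriv Yk) w := by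
    rw [hE.deriv_eq, deriv_fun_add
      ((hdYa.differentiableOn (by norm_num)).differentiableAt hmem)
      ((hdYk.differentiableOn (by norm_num)).differentiableAt hmem)]
  have ha' := heqa w hw
  have hk' := heqk w hw
  rw [hint, hdd, hδ w]
  nlinarith [ha', hk']
end

section
/- Let λ_max ∈ ℝ, C₁ > 0, C₂ > 0, Δλ < 0 and Δt > 0 be real numbers. For σ > 0 define the time-averaged growth rate f(σ) = λ_max − C₁·σ + (Δλ/Δt)·(C₂/σ)·(1 − exp(−Δt·σ/C₂)). If Δt > 2·C₁·C₂/(−Δλ), then there exists σ > 0 such that f(σ) > λ_max + Δλ. Since lim_{σ→0⁺} f(σ) = λ_max + Δλ, a strictly positive fluctuation level σ yields a strictly larger time-averaged growth rate than the optimal (zero-fluctuation) limit. -/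
open Real

lemma cubic_exp_neg {x : ℝ} (h0 : 0 ≤ x) (h1 : x ≤ 1) :
    1 - x + x ^ 2 / 2 - (2 / 9) * x ^ 3 ≤ Real.exp (-x) := by
  have hx : |(-x)| ≤ 1 := by rw [abs_neg, abs_of_nonneg h0]; exact h1
  have h := Real.exp_bound hx (n := 3) (by norm_num)
  have hsum : ∑ m ∈ Finset.range 3, (-x) ^ m / (m.factorial : ℝ)
      = 1 - x + x ^ 2 / 2 := by
    simp [Finset.sum_range_succ]
    ring
  rw [hsum, abs_neg, abs_of_nonneg h0] at h
  have h' := (abs_sub_le_iff.1 h).2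
  have : (3:ℕ).succ / ((3:ℕ).factorial * (3:ℕ) : ℝ) = 2 / 9 := by norm_num [Nat.factorial]
  rw [this] at h'
  nlinarith [h']

/-- Discussion: if the averaging window `Δt` exceeds `2C₁C₂/(−Δλ)`, then some
strictly positive fluctuation level `σ` makes the time-averaged growth rate
`f(σ) = λ_max − C₁σ + (Δλ/Δt)(C₂/σ)(1 − e^{−Δt σ/C₂})` strictly larger than its
zero-fluctuation limit `λ_max + Δλ`. -/
theorem suboptimal_fluctuations_beat_optimum
    (lamMax C₁ C₂ dlam dt : ℝ)
    (hC₁ : 0 < C₁) (hC₂ : 0 < C₂) (hdlam : dlam < 0) (hdt : 0 < dt)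
    (f : ℝ → ℝ)
    (hf : ∀ σ : ℝ, 0 < σ →
      f σ = lamMax - C₁ * σ
        + (dlam / dt) * (C₂ / σ) * (1 - Real.exp (-(dt * σ / C₂))))
    (hbig : 2 * C₁ * C₂ / (-dlam) < dt) :
    ∃ σ : ℝ, 0 < σ ∧ lamMax + dlam < f σ := by
  set a : ℝ := -dlam with ha_def
  have ha : 0 < a := by simp [ha_def]; linarith
  have hAD : 2 * C₁ * C₂ < a * dt := by
    rw [div_lt_iff₀ ha] at hbig; linarith
  set D : ℝ := a * dt - 2 * C₁ * C₂ with hD_def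
  have hD : 0 < D := by simp [hD_def]; linarith
  have hadt : 0 < a * dt := mul_pos ha hdt
  set x₀ : ℝ := min 1 (9 * D / (16 * (a * dt))) with hx0_def
  have hx0pos : 0 < x₀ := lt_min one_pos (by positivity)
  have hx01 : x₀ ≤ 1 := min_le_left _ _
  have hx0le : x₀ ≤ 9 * D / (16 * (a * dt)) := min_le_right _ _
  have hx0le' : 16 * (a * dt) * x₀ ≤ 9 * D := by
    rw [le_div_iff₀ (by positivity)] at hx0le
    linarith
  set σ : ℝ := C₂ * x₀ / dt with hσ_def
  have hσ : 0 < σ := by positivity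
  refine ⟨σ, hσ, ?_⟩
  rw [hf σ hσ]
  have hxeq : dt * σ / C₂ = x₀ := by
    rw [hσ_def]; field_simp
  rw [hxeq]
  have hcoef : (dlam / dt) * (C₂ / σ) = dlam / x₀ := by
    rw [hσ_def]; field_simp
  rw [hcoef]
  have hE := cubic_exp_neg hx0pos.le hx01
  set E : ℝ := Real.exp (-x₀) with hE_def
  refine lt_of_mul_lt_mul_right ?_ hx0pos.le
  have hexpand : (lamMax - C₁ * σ + dlam / x₀ * (1 - E)) * x₀
      = (lamMax - C₁ * σ) * x₀ + dlam * (1 - E) := by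
    field_simp
  rw [hexpand]
  have hkey : C₁ * σ * x₀ < a * (x₀ - 1 + E) := by
    have hσx : C₁ * σ * x₀ * dt = C₁ * C₂ * x₀ ^ 2 := by
      rw [hσ_def]; field_simp
    have h1 : a * dt * (1 - x₀ + x₀ ^ 2 / 2 - (2 / 9) * x₀ ^ 3) ≤ a * dt * E :=
      mul_le_mul_of_nonneg_left hE hadt.le
    have h2 : 16 * (a * dt) * x₀ * x₀ ^ 2 ≤ 9 * D * x₀ ^ 2 :=
      mul_le_mul_of_nonneg_right hx0le' (sq_nonneg x₀)
    have h3 : 0 < D * x₀ ^ 2 := mul_pos hD (by positivity)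
    have h4 : C₁ * σ * x₀ * dt < a * (x₀ - 1 + E) * dt := by
      rw [hσx]
      nlinarith [h1, h2, h3]
    exact lt_of_mul_lt_mul_right (by linarith) hdt.le
  have hdlam_a : dlam = -a := by rw [ha_def]; ring
  rw [hdlam_a]
  nlinarith [hkey]
end
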